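/- arXiv:2304.11614 — 5 statements merged into one kernel-verified Lean document; each statement's English description precedes it below -/
import Mathlib

section
/- The integral from 0 to 1 of arctanh(x)·log(1−x²)/x dx equals −(7/8)·ζ(3). -/
open Real

/-- The real Riemann zeta value ζ(s) = ∑_{n≥1} 1/n^s. -/
noncomputable def zetaR (s : ℕ) : ℝ := ∑' n : ℕ, 1 / ((n : ℝ) + 1) ^ s

/-- Inverse hyperbolic tangent: arctanh x = (1/2) log((1+x)/(1−x)). -/
noncomputable def arctanh (x : ℝ) : ℝ := (1 / 2) * Real.log ((1 + x) / (1 - x))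

namespace Stmt0Aux

open Finset Filter

/-- Partial harmonic sum `H n = ∑_{i<n} 1/(i+1)`. -/
noncomputable def Hh (n : ℕ) : ℝ := ∑ i ∈ Finset.range n, 1 / ((i : ℝ) + 1)

/-- Partial odd harmonic sum `O n = ∑_{i<n} 1/(2i+1)`. -/
noncomputable def Oh (n : ℕ) : ℝ := ∑ i ∈ Finset.range n, 1 / (2 * (i : ℝ) + 1)

/-- `tt (a,b) = 1/((a+1)(b+1)(a+b+2))`, i.e. `1/(AB(A+B))` for `A=a+1, B=b+1`. -/
noncomputable def tt (p : ℕ × ℕ) : ℝ :=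
  1 / (((p.1 : ℝ) + 1) * ((p.2 : ℝ) + 1) * ((p.1 : ℝ) + (p.2 : ℝ) + 2))

/-- `Sterm (m,k) = 1/((2m+1)(k+1)(2m+2k+3))`. -/
noncomputable def Sterm (p : ℕ × ℕ) : ℝ :=
  1 / ((2 * (p.1 : ℝ) + 1) * ((p.2 : ℝ) + 1) * (2 * (p.1 : ℝ) + 2 * (p.2 : ℝ) + 3))

lemma tt_nonneg (p : ℕ × ℕ) : 0 ≤ tt p := by unfold tt; positivity

lemma Sterm_nonneg (p : ℕ × ℕ) : 0 ≤ Sterm p := by unfold Sterm; positivity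

/-- Telescoping sums: `∑_b (f b - f (b+d)) = ∑_{i<d} f i` for `f` antitone tending to 0. -/
lemma hasSum_sub_shift (f : ℕ → ℝ) (hanti : ∀ n m : ℕ, n ≤ m → f m ≤ f n)
    (hlim : Tendsto f atTop (nhds 0)) (d : ℕ) :
    HasSum (fun b => f b - f (b + d)) (∑ i ∈ Finset.range d, f i) := by
  have hnn : ∀ i, 0 ≤ f i - f (i + d) :=
    fun i => sub_nonneg.2 (hanti i (i + d) (Nat.le_add_right _ _))
  rw [hasSum_iff_tendsto_nat_of_nonneg hnn]
  have key : ∀ B, ∑ b ∈ Finset.range B, (f b - f (b + d))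
      = ∑ i ∈ Finset.range d, f i - ∑ i ∈ Finset.range d, f (B + i) := by
    intro B
    have h1 := Finset.sum_range_add f B d
    have h2 := Finset.sum_range_add f d B
    have h3 : ∑ b ∈ Finset.range B, f (b + d) = ∑ b ∈ Finset.range B, f (d + b) :=
      Finset.sum_congr rfl fun b _ => by rw [Nat.add_comm]
    have h4 : B + d = d + B := Nat.add_comm _ _
    rw [h4] at h1
    rw [Finset.sum_sub_distrib, h3]
    linarith [h1, h2]
  simp only [key]
  have hz : Tendsto (fun B => ∑ i ∈ Finset.range d, f (B + i)) atTop (nhds 0) := by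
    have := tendsto_finset_sum (Finset.range d)
      (fun i _ => hlim.comp (Filter.tendsto_add_atTop_nat i))
    simpa using this
  simpa using tendsto_const_nhds.sub hz

lemma f1_anti : ∀ n m : ℕ, n ≤ m → 1 / ((m : ℝ) + 1) ≤ 1 / ((n : ℝ) + 1) := by
  intro n m h
  have : (n : ℝ) ≤ (m : ℝ) := by exact_mod_cast h
  gcongr

lemma f1_lim : Tendsto (fun n : ℕ => 1 / ((n : ℝ) + 1)) atTop (nhds 0) :=
  tendsto_one_div_add_atTop_nhds_zero_nat

lemma f2_anti : ∀ n m : ℕ, n ≤ m → 1 / (2 * (m : ℝ) + 1) ≤ 1 / (2 * (n : ℝ) + 1) := by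
  intro n m h
  have : (n : ℝ) ≤ (m : ℝ) := by exact_mod_cast h
  gcongr

lemma f2_lim : Tendsto (fun n : ℕ => 1 / (2 * (n : ℝ) + 1)) atTop (nhds 0) := by
  refine squeeze_zero (fun n => by positivity) (fun n => ?_) f1_lim
  have : ((n : ℝ) + 1) ≤ 2 * (n : ℝ) + 1 := by
    have : (0:ℝ) ≤ (n : ℝ) := n.cast_nonneg
    linarith
  have h0 : (0:ℝ) < (n : ℝ) + 1 := by positivity
  gcongr

/-- Row sums of `tt`. -/
lemma hasSum_tt_row (a : ℕ) :
    HasSum (fun b => tt (a, b)) (1 / ((a : ℝ) + 1) ^ 2 * Hh (a + 1)) := by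
  have h := (hasSum_sub_shift (fun n => 1 / ((n : ℝ) + 1)) f1_anti f1_lim (a + 1)).mul_left
    (1 / ((a : ℝ) + 1) ^ 2)
  have heq : (fun b : ℕ => 1 / ((a : ℝ) + 1) ^ 2 *
      (1 / ((b : ℝ) + 1) - 1 / (((b + (a + 1) : ℕ) : ℝ) + 1))) = fun b => tt (a, b) := by
    funext b
    have h1 : ((a : ℝ) + 1) ≠ 0 := by positivity
    have h2 : ((b : ℝ) + 1) ≠ 0 := by positivity
    have h3 : ((a : ℝ) + (b : ℝ) + 2) ≠ 0 := by positivity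
    unfold tt
    push_cast
    field_simp
    ring
  rw [heq] at h
  exact h

/-- Column sums of `Sterm` (over the first index `m`). -/
lemma hasSum_Sterm_col (k : ℕ) :
    HasSum (fun m => Sterm (m, k)) (1 / (2 * ((k : ℝ) + 1) ^ 2) * Oh (k + 1)) := by
  have h := (hasSum_sub_shift (fun n => 1 / (2 * (n : ℝ) + 1)) f2_anti f2_lim (k + 1)).mul_left
    (1 / (2 * ((k : ℝ) + 1) ^ 2))
  have heq : (fun m : ℕ => 1 / (2 * ((k : ℝ) + 1) ^ 2) *
      (1 / (2 * (m : ℝ) + 1) - 1 / (2 * ((m + (k + 1) : ℕ) : ℝ) + 1))) = fun m => Sterm (m, k) := by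
    funext m
    have h1 : (2 * (m : ℝ) + 1) ≠ 0 := by positivity
    have h2 : ((k : ℝ) + 1) ≠ 0 := by positivity
    have h3 : (2 * (m : ℝ) + 2 * (k : ℝ) + 3) ≠ 0 := by positivity
    unfold Sterm
    push_cast
    field_simp
    ring
  rw [heq] at h
  exact h

lemma summable_g32 : Summable (fun n : ℕ => 1 / (((n : ℝ) + 1) * Real.sqrt ((n : ℝ) + 1))) := by
  have h := Real.summable_one_div_nat_rpow.mpr (by norm_num : (1:ℝ) < 3/2)
  have h1 := (summable_nat_add_iff 1).mpr h
  refine h1.congr fun n => ?_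
  have hx : (0:ℝ) < (n : ℝ) + 1 := by positivity
  have hc : ((n + 1 : ℕ) : ℝ) = (n : ℝ) + 1 := by push_cast; ring
  rw [hc, show (3/2 : ℝ) = 1 + 1/2 by norm_num, Real.rpow_add hx, Real.rpow_one,
    ← Real.sqrt_eq_rpow]

lemma summable_tt : Summable tt := by
  have hg := summable_g32
  have hprod := hg.mul_of_nonneg hg (fun n => by positivity) (fun n => by positivity)
  refine Summable.of_nonneg_of_le tt_nonneg (fun p => ?_) hprod
  obtain ⟨a, b⟩ := p
  have hsq : Real.sqrt ((a:ℝ)+1) * Real.sqrt ((b:ℝ)+1) ≤ (a:ℝ)+(b:ℝ)+2 := by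
    rw [← Real.sqrt_mul (by positivity)]
    calc Real.sqrt (((a:ℝ)+1) * ((b:ℝ)+1)) ≤ Real.sqrt (((a:ℝ)+(b:ℝ)+2)^2) := by
          apply Real.sqrt_le_sqrt
          nlinarith [Nat.cast_nonneg (α := ℝ) a, Nat.cast_nonneg (α := ℝ) b]
      _ = (a:ℝ)+(b:ℝ)+2 := Real.sqrt_sq (by positivity)
  have key : ((a:ℝ)+1) * Real.sqrt ((a:ℝ)+1) * (((b:ℝ)+1) * Real.sqrt ((b:ℝ)+1))
      ≤ ((a:ℝ)+1) * ((b:ℝ)+1) * ((a:ℝ)+(b:ℝ)+2) := by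
    calc ((a:ℝ)+1) * Real.sqrt ((a:ℝ)+1) * (((b:ℝ)+1) * Real.sqrt ((b:ℝ)+1))
        = (((a:ℝ)+1) * ((b:ℝ)+1)) * (Real.sqrt ((a:ℝ)+1) * Real.sqrt ((b:ℝ)+1)) := by ring
      _ ≤ (((a:ℝ)+1) * ((b:ℝ)+1)) * ((a:ℝ)+(b:ℝ)+2) :=
          mul_le_mul_of_nonneg_left hsq (by positivity)
      _ = ((a:ℝ)+1) * ((b:ℝ)+1) * ((a:ℝ)+(b:ℝ)+2) := by ring
  show tt (a, b) ≤ 1 / (((a:ℝ)+1) * Real.sqrt ((a:ℝ)+1)) * (1 / (((b:ℝ)+1) * Real.sqrt ((b:ℝ)+1)))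
  unfold tt
  rw [div_mul_div_comm, one_mul]
  exact one_div_le_one_div_of_le (by positivity) key

lemma tsum_swap (F : ℕ × ℕ → ℝ) : ∑' p : ℕ × ℕ, F p.swap = ∑' p : ℕ × ℕ, F p := by
  simpa using (Equiv.prodComm ℕ ℕ).tsum_eq F

lemma tsum_prod_inner_fst {F : ℕ × ℕ → ℝ} (h : Summable F) :
    ∑' p : ℕ × ℕ, F p = ∑' c : ℕ, ∑' m : ℕ, F (m, c) := by
  rw [← tsum_swap F]
  exact Summable.tsum_prod' h.prod_symm fun c => h.prod_symm.prod_factor c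

noncomputable def uu (p : ℕ × ℕ) : ℝ := 1 / (((p.1:ℝ)+1) * ((p.1:ℝ)+(p.2:ℝ)+2)^2)

noncomputable def w2 (q : ℕ × ℕ) : ℝ :=
  if q.1 < q.2 then 1 / (((q.1:ℝ)+1) * ((q.2:ℝ)+1)^2) else 0

lemma tt_mk (a b : ℕ) :
    tt (a, b) = 1 / (((a:ℝ)+1) * ((b:ℝ)+1) * ((a:ℝ)+(b:ℝ)+2)) := rfl

lemma Sterm_mk (m k : ℕ) :
    Sterm (m, k) = 1 / ((2*(m:ℝ)+1) * ((k:ℝ)+1) * (2*(m:ℝ)+2*(k:ℝ)+3)) := rfl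

lemma uu_mk (a b : ℕ) : uu (a, b) = 1 / (((a:ℝ)+1) * ((a:ℝ)+(b:ℝ)+2)^2) := rfl

lemma w2_mk (a b : ℕ) : w2 (a, b) = if a < b then 1 / (((a:ℝ)+1) * ((b:ℝ)+1)^2) else 0 := rfl

lemma uu_nonneg (p : ℕ × ℕ) : 0 ≤ uu p := by unfold uu; positivity

lemma uu_le_tt (p : ℕ × ℕ) : uu p ≤ tt p := by
  obtain ⟨a, b⟩ := p
  rw [uu_mk, tt_mk]
  apply one_div_le_one_div_of_le (by positivity)
  have h1 : ((b:ℝ)+1) ≤ ((a:ℝ)+(b:ℝ)+2) := by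
    have := Nat.cast_nonneg (α := ℝ) a; linarith
  calc ((a:ℝ)+1) * ((b:ℝ)+1) * ((a:ℝ)+(b:ℝ)+2)
      = (((a:ℝ)+1) * ((a:ℝ)+(b:ℝ)+2)) * ((b:ℝ)+1) := by ring
    _ ≤ (((a:ℝ)+1) * ((a:ℝ)+(b:ℝ)+2)) * ((a:ℝ)+(b:ℝ)+2) :=
        mul_le_mul_of_nonneg_left h1 (by positivity)
    _ = ((a:ℝ)+1) * ((a:ℝ)+(b:ℝ)+2)^2 := by ring

lemma summable_uu : Summable uu := Summable.of_nonneg_of_le uu_nonneg uu_le_tt summable_tt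

lemma tt_split (p : ℕ × ℕ) : tt p = uu p + uu p.swap := by
  obtain ⟨a, b⟩ := p
  rw [Prod.swap_prod_mk, tt_mk, uu_mk, uu_mk]
  have h1 : ((a:ℝ)+1) ≠ 0 := by positivity
  have h2 : ((b:ℝ)+1) ≠ 0 := by positivity
  have h3 : ((a:ℝ)+(b:ℝ)+2) ≠ 0 := by positivity
  have h4 : ((b:ℝ)+(a:ℝ)+2) ≠ 0 := by positivity
  field_simp
  ring

def iota (p : ℕ × ℕ) : ℕ × ℕ := (p.1, p.1 + p.2 + 1)

lemma iota_mk (a b : ℕ) : iota (a, b) = (a, a + b + 1) := rfl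

lemma iota_inj : Function.Injective iota := by
  intro p q h
  simp only [iota, Prod.mk.injEq] at h
  obtain ⟨h1, h2⟩ := h
  exact Prod.ext h1 (by omega)

lemma w2_comp (p : ℕ × ℕ) : w2 (iota p) = uu p := by
  obtain ⟨a, b⟩ := p
  rw [iota_mk, w2_mk, uu_mk, if_pos (by omega)]
  push_cast
  ring_nf

lemma w2_support : Function.support w2 ⊆ Set.range iota := by
  intro q hq
  obtain ⟨m, c⟩ := q
  simp only [Function.mem_support, w2_mk] at hq
  by_cases h : m < c
  · exact ⟨(m, c - m - 1), by rw [iota_mk]; congr 1; omega⟩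
  · exact absurd (if_neg h) hq

lemma summable_w2 : Summable w2 := by
  refine (iota_inj.summable_iff ?_).mp ?_
  · intro x hx
    by_contra h
    exact hx (w2_support h)
  · exact summable_uu.congr fun p => (w2_comp p).symm

lemma w2_inner (c : ℕ) : ∑' m : ℕ, w2 (m, c) = 1 / ((c:ℝ)+1)^2 * Hh c := by
  rw [tsum_eq_sum (s := Finset.range c)
    (fun m hm => by rw [w2_mk, if_neg (by simpa using hm)])]
  unfold Hh
  rw [Finset.mul_sum]
  refine Finset.sum_congr rfl fun m hm => ?_
  have hmc : m < c := Finset.mem_range.mp hm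
  rw [w2_mk, if_pos hmc]
  have h1 : ((m:ℝ)+1) ≠ 0 := by positivity
  have h2 : ((c:ℝ)+1) ≠ 0 := by positivity
  field_simp

lemma tsum_uu : ∑' p : ℕ × ℕ, uu p = ∑' c : ℕ, (1 / ((c:ℝ)+1)^2 * Hh c) := by
  have h1 : ∑' p : ℕ × ℕ, uu p = ∑' q : ℕ × ℕ, w2 q := by
    rw [← iota_inj.tsum_eq (f := w2) w2_support]
    exact tsum_congr fun p => (w2_comp p).symm
  rw [h1, tsum_prod_inner_fst summable_w2]
  exact tsum_congr w2_inner

lemma summable_Rterm : Summable (fun c : ℕ => 1 / ((c:ℝ)+1)^2 * Hh c) := by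
  have h := (summable_w2.prod_symm).prod
  refine h.congr fun c => ?_
  simpa using w2_inner c

/-! ### The odd partial-fraction piece `vv` and its triangular reindexing -/

noncomputable def vv (p : ℕ × ℕ) : ℝ :=
  1 / ((2*(p.1:ℝ)+1) * (2*(p.1:ℝ)+2*(p.2:ℝ)+2)^2)

noncomputable def w3 (q : ℕ × ℕ) : ℝ :=
  if q.1 < q.2 then 1 / ((2*(q.1:ℝ)+1) * (2*(q.2:ℝ))^2) else 0

lemma vv_mk (a b : ℕ) : vv (a, b) = 1 / ((2*(a:ℝ)+1) * (2*(a:ℝ)+2*(b:ℝ)+2)^2) := rfl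

lemma w3_mk (a b : ℕ) :
    w3 (a, b) = if a < b then 1 / ((2*(a:ℝ)+1) * (2*(b:ℝ))^2) else 0 := rfl

lemma vv_nonneg (p : ℕ × ℕ) : 0 ≤ vv p := by unfold vv; positivity

lemma ttoo_mk (a b : ℕ) :
    tt (2*a, 2*b) = 1 / ((2*(a:ℝ)+1) * (2*(b:ℝ)+1) * (2*(a:ℝ)+2*(b:ℝ)+2)) := by
  rw [tt_mk]
  push_cast
  ring_nf

lemma vv_le_ttoo (p : ℕ × ℕ) : vv p ≤ tt (2*p.1, 2*p.2) := by
  obtain ⟨a, b⟩ := p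
  rw [vv_mk, ttoo_mk]
  apply one_div_le_one_div_of_le (by positivity)
  have h1 : (2*(b:ℝ)+1) ≤ (2*(a:ℝ)+2*(b:ℝ)+2) := by
    have := Nat.cast_nonneg (α := ℝ) a; linarith
  calc (2*(a:ℝ)+1) * (2*(b:ℝ)+1) * (2*(a:ℝ)+2*(b:ℝ)+2)
      = ((2*(a:ℝ)+1) * (2*(a:ℝ)+2*(b:ℝ)+2)) * (2*(b:ℝ)+1) := by ring
    _ ≤ ((2*(a:ℝ)+1) * (2*(a:ℝ)+2*(b:ℝ)+2)) * (2*(a:ℝ)+2*(b:ℝ)+2) :=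
        mul_le_mul_of_nonneg_left h1 (by positivity)
    _ = (2*(a:ℝ)+1) * (2*(a:ℝ)+2*(b:ℝ)+2)^2 := by ring

lemma summable_ttoo : Summable (fun p : ℕ × ℕ => tt (2*p.1, 2*p.2)) := by
  have h : Function.Injective (fun p : ℕ × ℕ => (2*p.1, 2*p.2)) := by
    intro p q hpq
    simp only [Prod.mk.injEq] at hpq
    exact Prod.ext (by omega) (by omega)
  exact summable_tt.comp_injective h

lemma summable_vv : Summable vv :=
  Summable.of_nonneg_of_le vv_nonneg vv_le_ttoo summable_ttoo

lemma ttoo_split (p : ℕ × ℕ) : tt (2*p.1, 2*p.2) = vv p + vv p.swap := by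
  obtain ⟨a, b⟩ := p
  rw [Prod.swap_prod_mk, ttoo_mk, vv_mk, vv_mk]
  have h1 : (2*(a:ℝ)+1) ≠ 0 := by positivity
  have h2 : (2*(b:ℝ)+1) ≠ 0 := by positivity
  have h3 : (2*(a:ℝ)+2*(b:ℝ)+2) ≠ 0 := by positivity
  have h4 : (2*(b:ℝ)+2*(a:ℝ)+2) ≠ 0 := by positivity
  field_simp
  ring

lemma w3_comp (p : ℕ × ℕ) : w3 (iota p) = vv p := by
  obtain ⟨a, b⟩ := p
  rw [iota_mk, w3_mk, vv_mk, if_pos (by omega)]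
  push_cast
  ring_nf

lemma w3_support : Function.support w3 ⊆ Set.range iota := by
  intro q hq
  obtain ⟨m, c⟩ := q
  simp only [Function.mem_support, w3_mk] at hq
  by_cases h : m < c
  · exact ⟨(m, c - m - 1), by rw [iota_mk]; congr 1; omega⟩
  · exact absurd (if_neg h) hq

lemma summable_w3 : Summable w3 := by
  refine (iota_inj.summable_iff ?_).mp ?_
  · intro x hx
    by_contra h
    exact hx (w3_support h)
  · exact summable_vv.congr fun p => (w3_comp p).symm

/-- `Qterm c = O_c / c²` (interpreted as `0` at `c = 0`). -/
noncomputable def Qterm (c : ℕ) : ℝ := Oh c / (c:ℝ)^2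

lemma w3_inner (c : ℕ) : ∑' m : ℕ, w3 (m, c) = 1/4 * Qterm c := by
  rw [tsum_eq_sum (s := Finset.range c)
    (fun m hm => by rw [w3_mk, if_neg (by simpa using hm)])]
  rcases Nat.eq_zero_or_pos c with hc | hc
  · subst hc
    simp [Qterm, Oh]
  unfold Qterm Oh
  rw [Finset.sum_div, Finset.mul_sum]
  refine Finset.sum_congr rfl fun m hm => ?_
  have hmc : m < c := Finset.mem_range.mp hm
  rw [w3_mk, if_pos hmc]
  have h1 : (2*(m:ℝ)+1) ≠ 0 := by positivity
  have h2 : ((c:ℝ)) ≠ 0 := by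
    have : (0:ℝ) < (c:ℝ) := by exact_mod_cast hc
    linarith
  field_simp
  ring

lemma tsum_vv : ∑' p : ℕ × ℕ, vv p = ∑' c : ℕ, (1/4 * Qterm c) := by
  have h1 : ∑' p : ℕ × ℕ, vv p = ∑' q : ℕ × ℕ, w3 q := by
    rw [← iota_inj.tsum_eq (f := w3) w3_support]
    exact tsum_congr fun p => (w3_comp p).symm
  rw [h1, tsum_prod_inner_fst summable_w3]
  exact tsum_congr w3_inner

lemma summable_Qterm : Summable Qterm := by
  have h := (summable_w3.prod_symm).prod
  have h2 : Summable (fun c : ℕ => 1/4 * Qterm c) := by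
    refine h.congr fun c => ?_
    simpa using w3_inner c
  have := h2.mul_left 4
  refine this.congr fun c => ?_
  ring

/-! ### Parity decomposition and evaluation of the double sums -/

noncomputable def Tval : ℝ := ∑' p : ℕ × ℕ, tt p
noncomputable def Sval : ℝ := ∑' p : ℕ × ℕ, Sterm p
noncomputable def zeta3 : ℝ := ∑' n : ℕ, 1 / ((n:ℝ)+1)^3

lemma summable_zeta3 : Summable (fun n : ℕ => 1 / ((n:ℝ)+1)^3) := by
  have h := Real.summable_one_div_nat_pow.mpr (by norm_num : 1 < 3)
  have h1 := (summable_nat_add_iff 1).mpr h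
  refine h1.congr fun n => ?_
  push_cast
  ring

lemma tt_symm_mk (a b : ℕ) : tt (a, b) = tt (b, a) := by
  rw [tt_mk, tt_mk]; ring_nf

lemma ttee_eq (p : ℕ × ℕ) : tt (2*p.1+1, 2*p.2+1) = 1/8 * tt p := by
  obtain ⟨a, b⟩ := p
  rw [tt_mk, tt_mk]
  push_cast
  have h1 : ((a:ℝ)+1) ≠ 0 := by positivity
  have h2 : ((b:ℝ)+1) ≠ 0 := by positivity
  have h3 : ((a:ℝ)+(b:ℝ)+2) ≠ 0 := by positivity
  field_simp
  ring

lemma ttoe_eq (p : ℕ × ℕ) : tt (2*p.1, 2*p.2+1) = 1/2 * Sterm p := by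
  obtain ⟨a, b⟩ := p
  rw [tt_mk, Sterm_mk]
  push_cast
  have h1 : (2*(a:ℝ)+1) ≠ 0 := by positivity
  have h2 : ((b:ℝ)+1) ≠ 0 := by positivity
  have h3 : (2*(a:ℝ)+2*(b:ℝ)+3) ≠ 0 := by positivity
  field_simp
  ring

lemma tteo_eq (p : ℕ × ℕ) : tt (2*p.1+1, 2*p.2) = 1/2 * Sterm p.swap := by
  obtain ⟨a, b⟩ := p
  rw [Prod.swap_prod_mk, tt_symm_mk, ttoe_eq (b, a)]

lemma summable_Sterm : Summable Sterm := by
  have hi : Function.Injective (fun p : ℕ × ℕ => (2*p.1, 2*p.2+1)) := by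
    intro p q h
    simp only [Prod.mk.injEq] at h
    exact Prod.ext (by omega) (by omega)
  have h : Summable (fun p : ℕ × ℕ => tt (2*p.1, 2*p.2+1)) := summable_tt.comp_injective hi
  have h2 := h.mul_left 2
  refine h2.congr fun p => ?_
  rw [ttoe_eq p]
  ring

/-- Splitting a double sum according to the parity of the first coordinate. -/
lemma tsum_split_fst (F : ℕ × ℕ → ℝ) (hF : Summable F) :
    ∑' p : ℕ × ℕ, F p
      = ∑' p : ℕ × ℕ, F (2*p.1, p.2) + ∑' p : ℕ × ℕ, F (2*p.1+1, p.2) := by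
  have h2 : Summable (fun p : ℕ × ℕ => F (2*p.1, p.2)) :=
    hF.comp_injective (fun p q h => by
      simp only [Prod.mk.injEq] at h; exact Prod.ext (by omega) h.2)
  have h3 : Summable (fun p : ℕ × ℕ => F (2*p.1+1, p.2)) :=
    hF.comp_injective (fun p q h => by
      simp only [Prod.mk.injEq] at h; exact Prod.ext (by omega) h.2)
  have hfib : ∀ a, Summable fun b => F (a, b) := fun a => hF.prod_factor a
  have hse : Summable (fun m : ℕ => ∑' j : ℕ, F (2*m, j)) := h2.prod
  have hso : Summable (fun m : ℕ => ∑' j : ℕ, F (2*m+1, j)) := h3.prod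
  calc ∑' p : ℕ × ℕ, F p = ∑' (a : ℕ) (b : ℕ), F (a, b) := Summable.tsum_prod' hF hfib
    _ = ∑' (m : ℕ) (j : ℕ), F (2*m, j) + ∑' (m : ℕ) (j : ℕ), F (2*m+1, j) :=
        (tsum_even_add_odd (f := fun a => ∑' (b : ℕ), F (a, b)) hse hso).symm
    _ = ∑' p : ℕ × ℕ, F (2*p.1, p.2) + ∑' p : ℕ × ℕ, F (2*p.1+1, p.2) := by
        rw [show (∑' (m : ℕ) (j : ℕ), F (2*m, j)) = ∑' p : ℕ × ℕ, F (2*p.1, p.2) from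
              (Summable.tsum_prod' h2 (fun m => h2.prod_factor m)).symm,
            show (∑' (m : ℕ) (j : ℕ), F (2*m+1, j)) = ∑' p : ℕ × ℕ, F (2*p.1+1, p.2) from
              (Summable.tsum_prod' h3 (fun m => h3.prod_factor m)).symm]

/-- Splitting a double sum according to the parity of the second coordinate. -/
lemma tsum_split_snd (F : ℕ × ℕ → ℝ) (hF : Summable F) :
    ∑' p : ℕ × ℕ, F p
      = ∑' p : ℕ × ℕ, F (p.1, 2*p.2) + ∑' p : ℕ × ℕ, F (p.1, 2*p.2+1) := by
  have h2 : Summable (fun p : ℕ × ℕ => F (p.1, 2*p.2)) :=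
    hF.comp_injective (fun p q h => by
      simp only [Prod.mk.injEq] at h; exact Prod.ext h.1 (by omega))
  have h3 : Summable (fun p : ℕ × ℕ => F (p.1, 2*p.2+1)) :=
    hF.comp_injective (fun p q h => by
      simp only [Prod.mk.injEq] at h; exact Prod.ext h.1 (by omega))
  have hfib : ∀ a, Summable fun b => F (a, b) := fun a => hF.prod_factor a
  have hje : ∀ a, Summable fun j : ℕ => F (a, 2*j) := fun a =>
    (hfib a).comp_injective (fun x y h => by omega)
  have hjo : ∀ a, Summable fun j : ℕ => F (a, 2*j+1) := fun a =>
    (hfib a).comp_injective (fun x y h => by omega)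
  calc ∑' p : ℕ × ℕ, F p = ∑' (a : ℕ) (b : ℕ), F (a, b) := Summable.tsum_prod' hF hfib
    _ = ∑' (a : ℕ), (∑' (j : ℕ), F (a, 2*j) + ∑' (j : ℕ), F (a, 2*j+1)) :=
        tsum_congr fun a => (tsum_even_add_odd (f := fun b => F (a, b)) (hje a) (hjo a)).symm
    _ = ∑' (a : ℕ) (j : ℕ), F (a, 2*j) + ∑' (a : ℕ) (j : ℕ), F (a, 2*j+1) :=
        Summable.tsum_add h2.prod h3.prod
    _ = ∑' p : ℕ × ℕ, F (p.1, 2*p.2) + ∑' p : ℕ × ℕ, F (p.1, 2*p.2+1) := by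
        rw [show (∑' (a : ℕ) (j : ℕ), F (a, 2*j)) = ∑' p : ℕ × ℕ, F (p.1, 2*p.2) from
              (Summable.tsum_prod' h2 (fun a => h2.prod_factor a)).symm,
            show (∑' (a : ℕ) (j : ℕ), F (a, 2*j+1)) = ∑' p : ℕ × ℕ, F (p.1, 2*p.2+1) from
              (Summable.tsum_prod' h3 (fun a => h3.prod_factor a)).symm]

lemma T_decomp : Tval
    = ∑' p : ℕ × ℕ, tt (2*p.1, 2*p.2) + ∑' p : ℕ × ℕ, tt (2*p.1+1, 2*p.2)
    + (∑' p : ℕ × ℕ, tt (2*p.1, 2*p.2+1) + ∑' p : ℕ × ℕ, tt (2*p.1+1, 2*p.2+1)) := by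
  have hE : Summable (fun p : ℕ × ℕ => tt (p.1, 2*p.2)) :=
    summable_tt.comp_injective (fun p q h => by
      simp only [Prod.mk.injEq] at h; exact Prod.ext h.1 (by omega))
  have hO : Summable (fun p : ℕ × ℕ => tt (p.1, 2*p.2+1)) :=
    summable_tt.comp_injective (fun p q h => by
      simp only [Prod.mk.injEq] at h; exact Prod.ext h.1 (by omega))
  unfold Tval
  rw [tsum_split_snd tt summable_tt,
    show (∑' p : ℕ × ℕ, tt (p.1, 2*p.2))
        = ∑' p : ℕ × ℕ, tt (2*p.1, 2*p.2) + ∑' p : ℕ × ℕ, tt (2*p.1+1, 2*p.2) from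
      tsum_split_fst (fun p => tt (p.1, 2*p.2)) hE,
    show (∑' p : ℕ × ℕ, tt (p.1, 2*p.2+1))
        = ∑' p : ℕ × ℕ, tt (2*p.1, 2*p.2+1) + ∑' p : ℕ × ℕ, tt (2*p.1+1, 2*p.2+1) from
      tsum_split_fst (fun p => tt (p.1, 2*p.2+1)) hO]

lemma Tval_eq_E : Tval = ∑' a : ℕ, (1 / ((a:ℝ)+1)^2 * Hh (a+1)) := by
  unfold Tval
  rw [Summable.tsum_prod' summable_tt (fun a => (hasSum_tt_row a).summable)]
  exact tsum_congr fun a => (hasSum_tt_row a).tsum_eq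

lemma Tval_eq_2uu : Tval = 2 * ∑' p : ℕ × ℕ, uu p := by
  unfold Tval
  rw [tsum_congr tt_split, Summable.tsum_add summable_uu summable_uu.prod_symm, tsum_swap uu]
  ring

lemma Tval_eq_zeta : Tval = 2 * zeta3 := by
  have key : ∀ a : ℕ, 1 / ((a:ℝ)+1)^2 * Hh (a+1)
      = 1 / ((a:ℝ)+1)^2 * Hh a + 1 / ((a:ℝ)+1)^3 := by
    intro a
    have hstep : Hh (a+1) = Hh a + 1 / ((a:ℝ)+1) := by
      unfold Hh
      exact Finset.sum_range_succ _ a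
    rw [hstep]
    have h2 : ((a:ℝ)+1) ≠ 0 := by positivity
    field_simp
  have h1 : Tval = (∑' c : ℕ, (1 / ((c:ℝ)+1)^2 * Hh c)) + zeta3 := by
    rw [Tval_eq_E, tsum_congr key]
    exact Summable.tsum_add summable_Rterm summable_zeta3
  have h2 : Tval = 2 * ∑' c : ℕ, (1 / ((c:ℝ)+1)^2 * Hh c) := by
    rw [Tval_eq_2uu, tsum_uu]
  linarith

lemma Too_eq : ∑' p : ℕ × ℕ, tt (2*p.1, 2*p.2) = 1/2 * ∑' c : ℕ, Qterm c := by
  rw [tsum_congr ttoo_split, Summable.tsum_add summable_vv summable_vv.prod_symm, tsum_swap vv, tsum_vv,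
    tsum_mul_left]
  ring

lemma Sval_eq_Q : Sval = 1/2 * ∑' c : ℕ, Qterm c := by
  have h2 : ∀ k : ℕ, ∑' m : ℕ, Sterm (m, k) = 1/2 * Qterm (k+1) := by
    intro k
    rw [(hasSum_Sterm_col k).tsum_eq]
    unfold Qterm
    push_cast
    have hk : ((k:ℝ)+1) ≠ 0 := by positivity
    field_simp
  have h3 : ∑' c : ℕ, Qterm c = ∑' k : ℕ, Qterm (k+1) := by
    rw [Summable.tsum_eq_zero_add summable_Qterm]
    simp [Qterm, Oh]
  unfold Sval
  rw [tsum_prod_inner_fst summable_Sterm, tsum_congr h2, tsum_mul_left, h3]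

lemma Sval_eq : Sval = 7/8 * zeta3 := by
  have hToo : ∑' p : ℕ × ℕ, tt (2*p.1, 2*p.2) = Sval := by rw [Too_eq, ← Sval_eq_Q]
  have hToe : ∑' p : ℕ × ℕ, tt (2*p.1, 2*p.2+1) = 1/2 * Sval := by
    rw [tsum_congr ttoe_eq, tsum_mul_left]
    rfl
  have hTeo : ∑' p : ℕ × ℕ, tt (2*p.1+1, 2*p.2) = 1/2 * Sval := by
    rw [tsum_congr tteo_eq, tsum_mul_left, tsum_swap Sterm]
    rfl
  have hTee : ∑' p : ℕ × ℕ, tt (2*p.1+1, 2*p.2+1) = 1/8 * Tval := by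
    rw [tsum_congr ttee_eq, tsum_mul_left]
    rfl
  have hdec := T_decomp
  rw [hToo, hToe, hTeo, hTee] at hdec
  have hT : Tval = 2 * zeta3 := Tval_eq_zeta
  linarith

/-! ### The integrand as a double series -/

noncomputable def hterm (p : ℕ × ℕ) (x : ℝ) : ℝ :=
  x ^ (2*p.1 + 2*p.2 + 2) / ((2*(p.1:ℝ)+1) * ((p.2:ℝ)+1))

lemma hterm_cont (p : ℕ × ℕ) : Continuous (hterm p) :=
  (continuous_pow _).div_const _

lemma hterm_intgb (p : ℕ × ℕ) :
    MeasureTheory.IntegrableOn (hterm p) (Set.Ioc (0:ℝ) 1) :=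
  (hterm_cont p).integrableOn_Ioc

lemma hterm_integral (p : ℕ × ℕ) :
    ∫ x in Set.Ioc (0:ℝ) 1, hterm p x = Sterm p := by
  obtain ⟨m, k⟩ := p
  rw [← intervalIntegral.integral_of_le zero_le_one]
  unfold hterm
  rw [intervalIntegral.integral_div, integral_pow, Sterm_mk]
  push_cast
  have h1 : (2*(m:ℝ)+1) ≠ 0 := by positivity
  have h2 : ((k:ℝ)+1) ≠ 0 := by positivity
  have h3 : (2*(m:ℝ)+2*(k:ℝ)+3) ≠ 0 := by positivity
  rw [one_pow, zero_pow (by omega)]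
  field_simp
  ring

lemma hterm_norm_integral (p : ℕ × ℕ) :
    ∫ x in Set.Ioc (0:ℝ) 1, ‖hterm p x‖ = Sterm p := by
  rw [← hterm_integral p]
  apply MeasureTheory.setIntegral_congr_fun measurableSet_Ioc
  intro x hx
  show ‖hterm p x‖ = hterm p x
  rw [Real.norm_eq_abs, abs_of_nonneg]
  have hx0 : (0:ℝ) ≤ x := le_of_lt hx.1
  unfold hterm
  positivity

lemma integral_eq_Sval :
    ∫ x in Set.Ioc (0:ℝ) 1, (∑' p : ℕ × ℕ, hterm p x) = Sval := by
  rw [← MeasureTheory.integral_tsum_of_summable_integral_norm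
      (fun p => hterm_intgb p)
      (summable_Sterm.congr fun p => (hterm_norm_integral p).symm)]
  unfold Sval
  exact tsum_congr hterm_integral

lemma hasSum_arctanh_div (x : ℝ) (hx0 : 0 < x) (hx1 : x < 1) :
    HasSum (fun m : ℕ => x ^ (2*m) / (2*(m:ℝ)+1)) (arctanh x / x) := by
  have habs : |x| < 1 := by rw [abs_of_pos hx0]; exact hx1
  have h := (hasSum_log_sub_log_of_abs_lt_one habs).div_const (2 * x)
  have heq : (fun m : ℕ => 2*(1/(2*(m:ℝ)+1))*x^(2*m+1) / (2*x))
      = fun m : ℕ => x ^ (2*m) / (2*(m:ℝ)+1) := by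
    funext m
    have hm : 2*(m:ℝ)+1 ≠ 0 := by positivity
    have hx : x ≠ 0 := ne_of_gt hx0
    rw [pow_succ]
    field_simp
  rw [heq] at h
  rw [show arctanh x / x = (Real.log (1 + x) - Real.log (1 - x)) / (2 * x) from ?_]; exact h
  unfold arctanh
  rw [Real.log_div (by linarith) (by linarith)]
  have hx : x ≠ 0 := ne_of_gt hx0
  field_simp

lemma hasSum_logpart (x : ℝ) (hx0 : 0 < x) (hx1 : x < 1) :
    HasSum (fun k : ℕ => (x^2) ^ (k+1) / ((k:ℝ)+1)) (-Real.log (1 - x^2)) := by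
  apply hasSum_pow_div_log_of_abs_lt_one
  rw [abs_of_pos (by positivity)]
  nlinarith

lemma hasSum_prod (x : ℝ) (hx0 : 0 < x) (hx1 : x < 1) :
    HasSum (fun p : ℕ × ℕ => hterm p x) (-(arctanh x * Real.log (1 - x^2) / x)) := by
  have h1 := hasSum_arctanh_div x hx0 hx1
  have h2 := hasSum_logpart x hx0 hx1
  have hs : Summable (fun p : ℕ × ℕ =>
      (x ^ (2*p.1) / (2*(p.1:ℝ)+1)) * ((x^2) ^ (p.2+1) / ((p.2:ℝ)+1))) :=
    h1.summable.mul_of_nonneg h2.summable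
      (fun m => by positivity) (fun k => by positivity)
  have h := h1.mul h2 hs
  have heq : (fun p : ℕ × ℕ =>
        (x ^ (2*p.1) / (2*(p.1:ℝ)+1)) * ((x^2) ^ (p.2+1) / ((p.2:ℝ)+1)))
      = fun p : ℕ × ℕ => hterm p x := by
    funext p
    unfold hterm
    have hexp : 2*p.1 + 2*(p.2+1) = 2*p.1 + 2*p.2 + 2 := by ring
    rw [div_mul_div_comm, ← pow_mul, ← pow_add, hexp]
  rw [heq] at h
  rw [show -(arctanh x * Real.log (1 - x^2) / x) = arctanh x / x * -Real.log (1 - x^2) from ?_]; exact h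
  have hx : x ≠ 0 := ne_of_gt hx0
  ring

end Stmt0Aux

open Stmt0Aux MeasureTheory

theorem stmt0 :
    ∫ x in (0:ℝ)..1, arctanh x * Real.log (1 - x ^ 2) / x = -(7 / 8) * zetaR 3 := by
  have hzeta : zetaR 3 = zeta3 := rfl
  rw [intervalIntegral.integral_of_le zero_le_one, integral_Ioc_eq_integral_Ioo]
  have key : ∫ x in Set.Ioo (0:ℝ) 1, arctanh x * Real.log (1 - x ^ 2) / x
      = ∫ x in Set.Ioo (0:ℝ) 1, (-(∑' p : ℕ × ℕ, hterm p x)) := by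
    apply setIntegral_congr_fun measurableSet_Ioo
    intro x hx
    show arctanh x * Real.log (1 - x ^ 2) / x = -(∑' p : ℕ × ℕ, hterm p x)
    rw [(hasSum_prod x hx.1 hx.2).tsum_eq]
    ring
  rw [key, integral_neg, ← integral_Ioc_eq_integral_Ioo, integral_eq_Sval, Sval_eq, hzeta]
  ring
end

section
/- The integral from 0 to 1 of log²(1+x)/x dx equals ζ(3)/4. -/
open Real MeasureTheory Set

lemma exp_neg_image : (fun y : ℝ => Real.exp (-y)) '' Ioi 0 = Ioo 0 1 := by
  ext t
  constructor
  · rintro ⟨y, hy, rfl⟩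
    exact ⟨Real.exp_pos _, Real.exp_lt_one_iff.mpr (by simpa using hy)⟩
  · rintro ⟨h0, h1⟩
    exact ⟨-Real.log t, by simpa using Real.log_neg h0 h1, by simp [Real.exp_log h0]⟩

lemma base_integral (k : ℕ) :
    ∫ t in Ioo (0:ℝ) 1, t ^ k * Real.log t ^ 2 = 2 / ((k:ℝ) + 1) ^ 3 := by
  have hinj : InjOn (fun y : ℝ => Real.exp (-y)) (Ioi 0) :=
    fun a _ b _ h => by simpa using Real.exp_injective h
  have hderiv : ∀ y ∈ Ioi (0:ℝ), HasDerivWithinAt (fun y : ℝ => Real.exp (-y))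
      (-Real.exp (-y)) (Ioi 0) y := by
    intro y _
    exact ((Real.hasDerivAt_exp (-y)).comp y ((hasDerivAt_id y).neg) |>.congr_deriv (by simp)).hasDerivWithinAt
  have him := integral_image_eq_integral_abs_deriv_smul measurableSet_Ioi hderiv hinj
      (fun t : ℝ => t ^ k * Real.log t ^ 2)
  rw [exp_neg_image] at him
  rw [him]
  have hcongr : ∀ y ∈ Ioi (0:ℝ),
      |(-Real.exp (-y))| • (Real.exp (-y) ^ k * Real.log (Real.exp (-y)) ^ 2)
      = y ^ ((3:ℝ) - 1) * Real.exp (-(((k:ℝ)+1) * y)) := by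
    intro y hy
    rw [abs_neg, abs_of_pos (Real.exp_pos _), Real.log_exp, smul_eq_mul,
      ← Real.exp_nat_mul, show ((3:ℝ)-1) = ((2:ℕ):ℝ) by norm_num, Real.rpow_natCast, neg_sq,
      show (-(((k:ℝ)+1)*y)) = -y + ↑k * -y by ring, Real.exp_add]
    ring
  rw [setIntegral_congr_fun measurableSet_Ioi hcongr,
    Real.integral_rpow_mul_exp_neg_mul_Ioi (by norm_num : (0:ℝ) < 3)
      (by positivity : (0:ℝ) < (k:ℝ) + 1),
    show (3:ℝ) = ((2:ℕ):ℝ) + 1 by norm_num, Real.Gamma_nat_eq_factorial]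
  rw [show (((2:ℕ):ℝ) + 1) = ((3:ℕ):ℝ) by norm_num, Real.rpow_natCast]
  norm_num
  ring

lemma base_integrable (k : ℕ) :
    IntegrableOn (fun t : ℝ => t ^ k * Real.log t ^ 2) (Ioo (0:ℝ) 1) := by
  have hinj : InjOn (fun y : ℝ => Real.exp (-y)) (Ioi 0) :=
    fun a _ b _ h => by simpa using Real.exp_injective h
  have hderiv : ∀ y ∈ Ioi (0:ℝ), HasDerivWithinAt (fun y : ℝ => Real.exp (-y))
      (-Real.exp (-y)) (Ioi 0) y := by
    intro y _
    exact ((Real.hasDerivAt_exp (-y)).comp y ((hasDerivAt_id y).neg) |>.congr_deriv (by simp)).hasDerivWithinAt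
  have him := integrableOn_image_iff_integrableOn_abs_deriv_smul measurableSet_Ioi hderiv hinj
      (fun t : ℝ => t ^ k * Real.log t ^ 2)
  rw [exp_neg_image] at him
  rw [him]
  have hbig : IntegrableOn (fun y : ℝ => y ^ ((3:ℝ) - 1) * Real.exp (-(((k:ℝ)+1) * y)))
      (Ioi 0) := by
    have := integrableOn_rpow_mul_exp_neg_mul_rpow (p := 1) (s := (3:ℝ)-1) (b := (k:ℝ)+1)
      (by norm_num) (by norm_num) (by positivity)
    refine this.congr_fun (fun y hy => ?_) measurableSet_Ioi
    dsimp only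
    rw [Real.rpow_one]
    ring_nf
  refine hbig.congr_fun (fun y hy => ?_) measurableSet_Ioi
  dsimp only
  rw [abs_neg, abs_of_pos (Real.exp_pos _), Real.log_exp, smul_eq_mul,
    ← Real.exp_nat_mul, show ((3:ℝ)-1) = ((2:ℕ):ℝ) by norm_num, Real.rpow_natCast, neg_sq,
    show (-(((k:ℝ)+1)*y)) = -y + ↑k * -y by ring, Real.exp_add]
  ring


lemma master (f : ℕ → ℝ → ℝ) (g : ℝ → ℝ) (v : ℕ → ℝ)
    (hf_cont : ∀ n, ContinuousOn (f n) (Ioo 0 1))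
    (hf_nonneg : ∀ n, ∀ t ∈ Ioo (0:ℝ) 1, 0 ≤ f n t)
    (hf_val : ∀ n, ∫ t in Ioo (0:ℝ) 1, f n t = v n)
    (hf_intgr : ∀ n, IntegrableOn (f n) (Ioo 0 1))
    (hg_cont : ContinuousOn g (Ioo 0 1))
    (hsum : ∀ t ∈ Ioo (0:ℝ) 1, HasSum (fun n => f n t) (g t))
    (hv : Summable v) :
    IntegrableOn g (Ioo (0:ℝ) 1) ∧ ∫ t in Ioo (0:ℝ) 1, g t = ∑' n, v n := by
  set μ := volume.restrict (Ioo (0:ℝ) 1) with hμ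
  have hae : ∀ᵐ t ∂μ, t ∈ Ioo (0:ℝ) 1 :=
    ae_restrict_mem measurableSet_Ioo
  have hfm : ∀ n, AEStronglyMeasurable (f n) μ :=
    fun n => (hf_cont n).aestronglyMeasurable measurableSet_Ioo
  have hgm : AEStronglyMeasurable g μ :=
    hg_cont.aestronglyMeasurable measurableSet_Ioo
  -- lintegral of each f n
  have hlint : ∀ n, ∫⁻ t, ‖f n t‖₊ ∂μ = ENNReal.ofReal (v n) := by
    intro n
    have h1 : ∫⁻ t, ‖f n t‖₊ ∂μ = ∫⁻ t, ENNReal.ofReal (f n t) ∂μ := by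
      exact lintegral_congr_ae (hae.mono fun t ht => Real.enorm_eq_ofReal (hf_nonneg n t ht))
    rw [h1, ← ofReal_integral_eq_lintegral_ofReal (hf_intgr n)
      (hae.mono fun t ht => hf_nonneg n t ht), hf_val n]
  have hvnn : ∀ n, 0 ≤ v n := by
    intro n
    rw [← hf_val n]
    exact setIntegral_nonneg measurableSet_Ioo (hf_nonneg n)
  have hfin : ∑' n, ∫⁻ t, ‖f n t‖₊ ∂μ ≠ ⊤ := by
    simp_rw [hlint]
    rw [← ENNReal.ofReal_tsum_of_nonneg hvnn hv]
    exact ENNReal.ofReal_ne_top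
  have hg_eq : ∀ᵐ t ∂μ, g t = ∑' n, f n t :=
    hae.mono fun t ht => ((hsum t ht).tsum_eq).symm
  constructor
  · refine ⟨hgm, ?_⟩
    show (∫⁻ t, ‖g t‖₊ ∂μ) < ⊤
    calc ∫⁻ t, ‖g t‖₊ ∂μ = ∫⁻ t, ∑' n, ENNReal.ofReal (f n t) ∂μ := by
          refine lintegral_congr_ae (hae.mono fun t ht => ?_)
          show ‖g t‖ₑ = ∑' n, ENNReal.ofReal (f n t)
          rw [Real.enorm_eq_ofReal ((hsum t ht).nonneg (fun n => hf_nonneg n t ht)),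
            ← (hsum t ht).tsum_eq,
            ENNReal.ofReal_tsum_of_nonneg (fun n => hf_nonneg n t ht) (hsum t ht).summable]
      _ = ∑' n, ∫⁻ t, ENNReal.ofReal (f n t) ∂μ :=
          lintegral_tsum (fun n => (hfm n).aemeasurable.ennreal_ofReal)
      _ < ⊤ := by
          have : ∀ n, ∫⁻ t, ENNReal.ofReal (f n t) ∂μ = ∫⁻ t, ‖f n t‖₊ ∂μ := by
            intro n
            exact lintegral_congr_ae
              (hae.mono fun t ht => (Real.enorm_eq_ofReal (hf_nonneg n t ht)).symm)
          simp_rw [this]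
          exact lt_of_le_of_ne le_top hfin
  · calc ∫ t, g t ∂μ = ∫ t, ∑' n, f n t ∂μ := integral_congr_ae hg_eq
      _ = ∑' n, ∫ t, f n t ∂μ := integral_tsum hfm hfin
      _ = ∑' n, v n := by simp_rw [hf_val]



lemma hZs : Summable (fun n : ℕ => 1 / ((n:ℝ) + 1) ^ 3) := by
  have h := (Real.summable_one_div_nat_pow (p := 3)).mpr (by norm_num)
  have := (summable_nat_add_iff 1).mpr h
  refine this.congr fun n => ?_
  push_cast
  ring

noncomputable def u (n : ℕ) : ℝ := 1 / ((n:ℝ) + 1) ^ 3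

lemma hus : Summable u := hZs

lemma odd_sum : ∑' k : ℕ, 1 / (2*(k:ℝ) + 1) ^ 3 = 7/8 * zetaR 3 := by
  have he : Summable (fun k : ℕ => u (2*k)) :=
    hus.comp_injective (mul_right_injective₀ (two_ne_zero))
  have ho : Summable (fun k : ℕ => u (2*k+1)) :=
    hus.comp_injective (fun a b h => by omega)
  have key := tsum_even_add_odd he ho
  have hZ : ∑' n, u n = zetaR 3 := rfl
  have hodd : ∑' k : ℕ, u (2*k+1) = 1/8 * zetaR 3 := by
    rw [← hZ, ← tsum_mul_left]
    refine tsum_congr fun k => ?_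
    unfold u
    push_cast
    have h1 : (2 * (k:ℝ) + 1 + 1) ^ 3 = 8 * ((k:ℝ)+1)^3 := by ring
    rw [h1, div_mul_div_comm]
    norm_num
  have heven : ∑' k : ℕ, u (2*k) = ∑' k : ℕ, 1 / (2*(k:ℝ) + 1) ^ 3 := by
    refine tsum_congr fun k => ?_
    unfold u
    push_cast
    ring_nf
  rw [hodd, heven, hZ] at key
  linarith

lemma log_contOn : ContinuousOn (fun t : ℝ => Real.log t ^ 2) (Ioo 0 1) :=
  (Real.continuousOn_log.mono (fun t ht => ne_of_gt ht.1)).pow 2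

lemma intJ : IntegrableOn (fun t : ℝ => Real.log t ^ 2 / (1 - t)) (Ioo (0:ℝ) 1) ∧
    ∫ t in Ioo (0:ℝ) 1, Real.log t ^ 2 / (1 - t) = 2 * zetaR 3 := by
  have h := master (fun n t => t ^ n * Real.log t ^ 2)
      (fun t => Real.log t ^ 2 / (1 - t)) (fun n => 2 / ((n:ℝ) + 1) ^ 3)
      (fun n => (continuousOn_pow n).mul log_contOn)
      (fun n t ht => mul_nonneg (pow_nonneg ht.1.le _) (sq_nonneg _))
      (fun n => base_integral n)
      (fun n => base_integrable n)
      (((Real.continuousOn_log.mono (fun t ht => ne_of_gt ht.1)).pow 2).div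
        (continuousOn_const.sub continuousOn_id)
        (fun t ht => by simpa using sub_ne_zero.mpr (ne_of_lt ht.2).symm))
      (fun t ht => by
        have h := (hasSum_geometric_of_lt_one ht.1.le ht.2).mul_right (Real.log t ^ 2)
        have h3 : (1 - t)⁻¹ * Real.log t ^ 2 = Real.log t ^ 2 / (1 - t) := by
          rw [div_eq_mul_inv]; ring
        rw [h3] at h; exact h)
      (hZs.mul_left 2 |>.congr (fun n => by ring))
  refine ⟨h.1, ?_⟩
  rw [h.2, show zetaR 3 = ∑' n : ℕ, 1 / ((n : ℝ) + 1) ^ 3 from rfl, ← tsum_mul_left]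
  exact tsum_congr fun n => by ring

lemma intD : IntegrableOn (fun t : ℝ => 2 * Real.log t ^ 2 / (1 - t^2)) (Ioo (0:ℝ) 1) ∧
    ∫ t in Ioo (0:ℝ) 1, 2 * Real.log t ^ 2 / (1 - t^2) = 7/2 * zetaR 3 := by
  have h := master (fun n t => 2 * (t ^ (2*n) * Real.log t ^ 2))
      (fun t => 2 * Real.log t ^ 2 / (1 - t^2)) (fun n => 4 / (2*(n:ℝ) + 1) ^ 3)
      (fun n => (continuousOn_const.mul ((continuousOn_pow (2*n)).mul log_contOn)))
      (fun n t ht => mul_nonneg (by norm_num) (mul_nonneg (pow_nonneg ht.1.le _) (sq_nonneg _)))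
      (fun n => by
        rw [MeasureTheory.integral_const_mul, base_integral (2*n)]
        push_cast; ring)
      (fun n => (base_integrable (2*n)).const_mul 2)
      ((continuousOn_const.mul log_contOn).div
        (continuousOn_const.sub (continuousOn_pow 2))
        (fun t ht => by intro h; simp only [Pi.sub_apply] at h; nlinarith [ht.1, ht.2]))
      (fun t ht => by
        have hr : t^2 < 1 := by nlinarith [ht.1, ht.2]
        have h := ((hasSum_geometric_of_lt_one (by positivity) hr).mul_right
          (Real.log t ^ 2)).mul_left 2
        have h2 : (fun n : ℕ => 2 * ((t^2) ^ n * Real.log t ^ 2))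
            = fun n => 2 * (t ^ (2*n) * Real.log t ^ 2) := by
          funext n; rw [pow_mul]
        rw [h2] at h
        have h3 : 2 * ((1 - t^2)⁻¹ * Real.log t ^ 2) = 2 * Real.log t ^ 2 / (1 - t^2) := by
          rw [div_eq_mul_inv]; ring
        rw [h3] at h; exact h)
      (by
        have hcmp : Summable (fun k : ℕ => 1 / (2*(k:ℝ) + 1) ^ 3) := by
          refine Summable.of_nonneg_of_le (fun n => by positivity) (fun n => ?_) hZs
          refine one_div_le_one_div_of_le (by positivity) ?_
          have hn : (0:ℝ) ≤ (n:ℝ) := Nat.cast_nonneg n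
          gcongr <;> linarith
        exact hcmp.mul_left 4 |>.congr (fun n => by ring))
  refine ⟨h.1, ?_⟩
  rw [h.2]
  have : ∑' n : ℕ, 4 / (2*(n:ℝ) + 1) ^ 3 = 4 * ∑' k : ℕ, 1 / (2*(k:ℝ) + 1) ^ 3 := by
    rw [← tsum_mul_left]; exact tsum_congr fun n => by ring
  rw [this, odd_sum]; ring

-- x ↦ 1 - x machinery
lemma sub_deriv : ∀ x ∈ Ioo (0:ℝ) 1, HasDerivWithinAt (fun x : ℝ => 1 - x) (-1) (Ioo 0 1) x :=
  fun x _ => ((hasDerivAt_id x).const_sub 1).hasDerivWithinAt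

lemma sub_inj : InjOn (fun x : ℝ => 1 - x) (Ioo 0 1) := by
  intro a _ b _ h
  have h' : 1 - a = 1 - b := h
  linarith

lemma sub_image : (fun x : ℝ => 1 - x) '' Ioo 0 1 = Ioo 0 1 := by
  ext t
  constructor
  · rintro ⟨x, hx, rfl⟩
    refine ⟨?_, ?_⟩
    · show (0:ℝ) < 1 - x; linarith [hx.2]
    · show (1:ℝ) - x < 1; linarith [hx.1]
  · rintro ⟨h0, h1⟩
    exact ⟨1 - t, ⟨by linarith, by linarith⟩, by show 1 - (1 - t) = t; ring⟩

-- J via substitution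
lemma subJ_int : IntegrableOn (fun x : ℝ => Real.log (1-x) ^ 2 / x) (Ioo (0:ℝ) 1) := by
  have him := integrableOn_image_iff_integrableOn_abs_deriv_smul measurableSet_Ioo sub_deriv
      sub_inj (fun t : ℝ => Real.log t ^ 2 / (1 - t))
  rw [sub_image] at him
  have h := him.mp intJ.1
  refine h.congr_fun (fun x hx => ?_) measurableSet_Ioo
  simp only [abs_neg, abs_one, one_smul]
  ring_nf

lemma subJ_val : ∫ x in Ioo (0:ℝ) 1, Real.log (1-x) ^ 2 / x = 2 * zetaR 3 := by
  have him := integral_image_eq_integral_abs_deriv_smul measurableSet_Ioo sub_deriv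
      sub_inj (fun t : ℝ => Real.log t ^ 2 / (1 - t))
  rw [sub_image] at him
  rw [← intJ.2, him]
  refine setIntegral_congr_fun measurableSet_Ioo (fun x hx => ?_)
  simp only [abs_neg, abs_one, one_smul]
  ring_nf

-- x ↦ x^2 machinery
lemma sq_deriv : ∀ x ∈ Ioo (0:ℝ) 1, HasDerivWithinAt (fun x : ℝ => x^2) (2*x) (Ioo 0 1) x :=
  fun x _ => by simpa using (hasDerivAt_pow 2 x).hasDerivWithinAt

lemma sq_inj : InjOn (fun x : ℝ => x^2) (Ioo 0 1) := by
  intro a ha b hb h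
  have h' : a^2 = b^2 := h
  nlinarith [ha.1, hb.1]

lemma sq_image : (fun x : ℝ => x^2) '' Ioo 0 1 = Ioo 0 1 := by
  ext t
  constructor
  · rintro ⟨x, hx, rfl⟩
    refine ⟨?_, ?_⟩
    · show (0:ℝ) < x^2; nlinarith [hx.1]
    · show x^2 < 1; nlinarith [hx.1, hx.2]
  · rintro ⟨h0, h1⟩
    refine ⟨Real.sqrt t, ⟨Real.sqrt_pos.mpr h0, ?_⟩, Real.sq_sqrt h0.le⟩
    have := Real.sqrt_lt_sqrt h0.le h1
    simpa using this

-- The auxiliary integrand for C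
lemma intC_aux_int : IntegrableOn (fun u : ℝ => Real.log (1-u) ^ 2 / u) (Ioo (0:ℝ) 1) :=
  subJ_int

lemma subC_int : IntegrableOn (fun x : ℝ => Real.log (1-x^2) ^ 2 / x) (Ioo (0:ℝ) 1) := by
  have him := integrableOn_image_iff_integrableOn_abs_deriv_smul measurableSet_Ioo sq_deriv
      sq_inj (fun u : ℝ => Real.log (1-u) ^ 2 / u)
  rw [sq_image] at him
  have h := him.mp subJ_int
  have h2 : IntegrableOn
      (fun x : ℝ => (1/2 : ℝ) * (|2*x| • (Real.log (1-x^2) ^ 2 / x^2))) (Ioo 0 1) :=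
    h.const_mul (1/2 : ℝ)
  refine h2.congr_fun (fun x hx => ?_) measurableSet_Ioo
  have hx0 : x ≠ 0 := ne_of_gt hx.1
  simp only [smul_eq_mul]
  rw [abs_of_pos (by linarith [hx.1] : (0:ℝ) < 2*x)]
  field_simp

lemma subC_val : ∫ x in Ioo (0:ℝ) 1, Real.log (1-x^2) ^ 2 / x = zetaR 3 := by
  have him := integral_image_eq_integral_abs_deriv_smul measurableSet_Ioo sq_deriv
      sq_inj (fun u : ℝ => Real.log (1-u) ^ 2 / u)
  rw [sq_image] at him
  -- him : ∫ u in Ioo, log(1-u)^2/u = ∫ x in Ioo, |2x| • log(1-x^2)^2/x^2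
  have hval : ∫ u in Ioo (0:ℝ) 1, Real.log (1-u) ^ 2 / u = 2 * zetaR 3 := subJ_val
  have hcongr : ∫ x in Ioo (0:ℝ) 1, |2*x| • (Real.log (1-x^2) ^ 2 / x^2)
      = ∫ x in Ioo (0:ℝ) 1, 2 * (Real.log (1-x^2) ^ 2 / x) := by
    refine setIntegral_congr_fun measurableSet_Ioo (fun x hx => ?_)
    have hx0 : x ≠ 0 := ne_of_gt hx.1
    simp only [smul_eq_mul]
    rw [abs_of_pos (by linarith [hx.1] : (0:ℝ) < 2*x)]
    field_simp
  rw [hval] at him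
  rw [hcongr, MeasureTheory.integral_const_mul] at him
  linarith

-- Möbius map x ↦ (1-x)/(1+x)
noncomputable def mob (x : ℝ) : ℝ := (1-x)/(1+x)

lemma mob_mem {x : ℝ} (hx : x ∈ Ioo (0:ℝ) 1) : mob x ∈ Ioo (0:ℝ) 1 := by
  obtain ⟨h0, h1⟩ := hx
  unfold mob
  constructor
  · exact div_pos (by linarith) (by linarith)
  · rw [div_lt_one (by linarith)]; linarith

lemma mob_invol {x : ℝ} (hx : x ∈ Ioo (0:ℝ) 1) : mob (mob x) = x := by
  obtain ⟨h0, h1⟩ := hx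
  unfold mob
  have h2 : (1:ℝ) + x ≠ 0 := by linarith
  have h3 : (1:ℝ) + (1-x)/(1+x) ≠ 0 := by
    have : (0:ℝ) < (1-x)/(1+x) := div_pos (by linarith) (by linarith)
    linarith
  field_simp
  ring

lemma mob_deriv : ∀ x ∈ Ioo (0:ℝ) 1,
    HasDerivWithinAt mob (-2/(1+x)^2) (Ioo 0 1) x := by
  intro x hx
  have h2 : (1:ℝ) + x ≠ 0 := by linarith [hx.1]
  have hd := (((hasDerivAt_id x).const_sub 1).div ((hasDerivAt_id x).const_add 1) h2)
  simp only [id_eq] at hd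
  show HasDerivWithinAt (fun x : ℝ => (1-x)/(1+x)) (-2/(1+x)^2) (Ioo 0 1) x
  refine hd.hasDerivWithinAt.congr_deriv ?_
  ring

lemma mob_inj : InjOn mob (Ioo 0 1) := by
  intro a ha b hb h
  rw [← mob_invol ha, ← mob_invol hb, h]

lemma mob_image : mob '' Ioo 0 1 = Ioo 0 1 := by
  ext t
  constructor
  · rintro ⟨x, hx, rfl⟩; exact mob_mem hx
  · intro ht; exact ⟨mob t, mob_mem ht, mob_invol ht⟩

lemma mob_key {x : ℝ} (hx : x ∈ Ioo (0:ℝ) 1) :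
    |(-2/(1+x)^2)| • (2 * Real.log (mob x) ^ 2 / (1 - (mob x)^2))
      = Real.log (mob x) ^ 2 / x := by
  obtain ⟨h0, h1⟩ := hx
  have h2 : (0:ℝ) < 1 + x := by linarith
  have h3 : 1 - (mob x)^2 = 4*x/(1+x)^2 := by
    unfold mob; field_simp; ring
  rw [h3, smul_eq_mul, abs_of_neg (div_neg_of_neg_of_pos (by norm_num) (by positivity) : -2/(1+x)^2 < (0:ℝ))]
  have h4 : x ≠ 0 := ne_of_gt h0
  field_simp
  ring

lemma subD_int : IntegrableOn (fun x : ℝ => Real.log (mob x) ^ 2 / x) (Ioo (0:ℝ) 1) := by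
  have him := integrableOn_image_iff_integrableOn_abs_deriv_smul measurableSet_Ioo mob_deriv
      mob_inj (fun t : ℝ => 2 * Real.log t ^ 2 / (1 - t^2))
  rw [mob_image] at him
  exact (him.mp intD.1).congr_fun (fun x hx => mob_key hx) measurableSet_Ioo

lemma subD_val : ∫ x in Ioo (0:ℝ) 1, Real.log (mob x) ^ 2 / x = 7/2 * zetaR 3 := by
  have him := integral_image_eq_integral_abs_deriv_smul measurableSet_Ioo mob_deriv
      mob_inj (fun t : ℝ => 2 * Real.log t ^ 2 / (1 - t^2))
  rw [mob_image, intD.2] at him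
  rw [him]
  exact setIntegral_congr_fun measurableSet_Ioo (fun x hx => (mob_key hx).symm)

lemma intB_int : IntegrableOn (fun x : ℝ => Real.log (1+x) ^ 2 / x) (Ioo (0:ℝ) 1) := by
  have hm : AEStronglyMeasurable (fun x : ℝ => Real.log (1+x) ^ 2 / x)
      (volume.restrict (Ioo (0:ℝ) 1)) := by
    refine ContinuousOn.aestronglyMeasurable ?_ measurableSet_Ioo
    refine ContinuousOn.div ?_ continuousOn_id (fun x hx => ne_of_gt hx.1)
    refine (Real.continuousOn_log.comp (by fun_prop) ?_).pow 2
    intro x hx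
    simp only [mem_compl_iff, mem_singleton_iff]
    intro h
    have : (1:ℝ) + x = 0 := h
    linarith [hx.1]
  haveI : IsFiniteMeasure (volume.restrict (Ioo (0:ℝ) 1)) :=
    ⟨by rw [Measure.restrict_apply_univ]; simp⟩
  refine ⟨hm, HasFiniteIntegral.of_bounded (C := 1) ?_⟩
  · refine (ae_restrict_mem measurableSet_Ioo).mono fun x hx => ?_
    obtain ⟨h0, h1⟩ := hx
    have hl0 : 0 ≤ Real.log (1+x) := Real.log_nonneg (by linarith)
    have hlx : Real.log (1+x) ≤ x := by
      have := Real.log_le_sub_one_of_pos (by linarith : (0:ℝ) < 1+x)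
      linarith
    have hsq : Real.log (1+x) ^ 2 ≤ x^2 := by nlinarith
    have : Real.log (1+x) ^ 2 / x ≤ x := by
      rw [div_le_iff₀ h0]; nlinarith
    rw [Real.norm_eq_abs, abs_of_nonneg (by positivity)]
    linarith

lemma main_Ioo : ∫ x in Ioo (0:ℝ) 1, Real.log (1+x) ^ 2 / x = zetaR 3 / 4 := by
  have hptwise : ∀ x ∈ Ioo (0:ℝ) 1,
      Real.log (1-x^2) ^ 2 / x + Real.log (mob x) ^ 2 / x
        = 2 * (Real.log (1-x) ^ 2 / x) + 2 * (Real.log (1+x) ^ 2 / x) := by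
    intro x hx
    obtain ⟨h0, h1⟩ := hx
    have hm : (1:ℝ) - x ≠ 0 := by linarith
    have hp : (1:ℝ) + x ≠ 0 := by linarith
    have e1 : Real.log (1-x^2) = Real.log (1-x) + Real.log (1+x) := by
      rw [show (1:ℝ) - x^2 = (1-x)*(1+x) by ring, Real.log_mul hm hp]
    have e2 : Real.log (mob x) = Real.log (1-x) - Real.log (1+x) := by
      unfold mob; rw [Real.log_div hm hp]
    rw [e1, e2]
    ring
  have hL : ∫ x in Ioo (0:ℝ) 1,
      (Real.log (1-x^2) ^ 2 / x + Real.log (mob x) ^ 2 / x) = 9/2 * zetaR 3 := by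
    rw [integral_add subC_int subD_int, subC_val, subD_val]
    ring
  have hR : ∫ x in Ioo (0:ℝ) 1,
      (Real.log (1-x^2) ^ 2 / x + Real.log (mob x) ^ 2 / x)
      = 4 * zetaR 3 + 2 * ∫ x in Ioo (0:ℝ) 1, Real.log (1+x) ^ 2 / x := by
    rw [setIntegral_congr_fun measurableSet_Ioo hptwise,
      integral_add (subJ_int.const_mul 2) (intB_int.const_mul 2),
      MeasureTheory.integral_const_mul, MeasureTheory.integral_const_mul, subJ_val]
    ring
  rw [hL] at hR
  linarith

theorem stmt1 :
    ∫ x in (0:ℝ)..1, Real.log (1 + x) ^ 2 / x = zetaR 3 / 4 := by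
  rw [intervalIntegral.integral_of_le zero_le_one,
    MeasureTheory.integral_Ioc_eq_integral_Ioo]
  exact main_Ioo
end

section
/- For every real y, the series ∑_{n=1}^∞ H̄_n·(e^y − ∑_{j=0}^n y^j/j!) converges and equals y·e^y·(Ein(2y) − Ein(y)) − cosh(y) + 1. -/
/-- n-th skew-harmonic number H̄_n = ∑_{k=1}^n (−1)^{k−1}/k. -/
noncomputable def skewHarm (n : ℕ) : ℝ := ∑ k ∈ Finset.range n, (-1) ^ k / ((k : ℝ) + 1)

/-- Complementary exponential integral Ein(z) = ∫_0^z (1 − e^{−t})/t dt. -/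
noncomputable def Ein (z : ℝ) : ℝ := ∫ t in (0:ℝ)..z, (1 - Real.exp (-t)) / t

open Finset MeasureTheory


lemma hasSum_exp' (y : ℝ) : HasSum (fun n : ℕ => y ^ n / (Nat.factorial n : ℝ)) (Real.exp y) := by
  rw [Real.exp_eq_exp_ℝ]; exact NormedSpace.expSeries_div_hasSum_exp y

lemma skewHarm_succ (n : ℕ) : skewHarm (n + 1) = skewHarm n + (-1) ^ n / ((n : ℝ) + 1) := by
  simp [skewHarm, Finset.sum_range_succ]

lemma abs_skewHarm_le (n : ℕ) : |skewHarm n| ≤ n := by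
  induction n with
  | zero => simp [skewHarm]
  | succ n ih =>
      rw [skewHarm_succ]
      refine (abs_add_le _ _).trans ?_
      push_cast
      have h1 : |(-1 : ℝ) ^ n / ((n : ℝ) + 1)| ≤ 1 := by
        rw [abs_div, abs_pow, abs_neg, abs_one, one_pow]
        rw [div_le_one (by positivity)]
        simp [abs_of_nonneg (by positivity : (0:ℝ) ≤ (n:ℝ)+1)]
      linarith

lemma sumSkew (N : ℕ) :
    ∑ i ∈ range N, skewHarm (i + 1) = ((N : ℝ) + 1) * skewHarm N - (1 - (-1) ^ N) / 2 := by
  induction N with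
  | zero => simp [skewHarm]
  | succ N ih =>
      rw [sum_range_succ, ih, skewHarm_succ]
      have hN : ((N : ℝ) + 1) ≠ 0 := by positivity
      push_cast
      field_simp
      ring

lemma choose_div (n : ℕ) :
    ∑ k ∈ range (n + 1), (n.choose k : ℝ) / ((k : ℝ) + 1) = (2 ^ (n + 1) - 1) / ((n : ℝ) + 1) := by
  have key : ∀ k ∈ range (n + 1), (n.choose k : ℝ) / ((k : ℝ) + 1)
      = ((n+1).choose (k+1) : ℝ) / ((n : ℝ) + 1) := by
    intro k _
    have h := Nat.add_one_mul_choose_eq n k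
    have h' : ((n : ℝ) + 1) * (n.choose k : ℝ) = ((n+1).choose (k+1) : ℝ) * ((k : ℝ) + 1) := by
      exact_mod_cast congrArg (Nat.cast (R := ℝ)) h
    rw [div_eq_div_iff (by positivity) (by positivity)]
    linarith [h']
  rw [Finset.sum_congr rfl key, ← Finset.sum_div]
  congr 1
  have : ∑ k ∈ range (n + 1), ((n+1).choose (k+1) : ℝ)
      = (∑ k ∈ range (n + 2), ((n+1).choose k : ℝ)) - 1 := by
    rw [Finset.sum_range_succ' (fun k => ((n+1).choose k : ℝ)) (n+1)]
    simp
  rw [this]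
  have h2 := Nat.sum_range_choose (n + 1)
  have : (∑ k ∈ range (n + 2), ((n+1).choose k : ℝ)) = 2 ^ (n+1) := by
    exact_mod_cast congrArg (Nat.cast (R := ℝ)) h2
  rw [this]

lemma keyU (n : ℕ) :
    ∑ k ∈ range (n + 2), (((n+1).choose k : ℝ)) * (-1) ^ k * skewHarm k
      = -((2:ℝ) ^ (n + 1) - 1) / ((n : ℝ) + 1) := by
  set f : ℕ → ℝ := fun k => (((n+1).choose k : ℝ)) * (-1) ^ k * skewHarm k with hf
  set g : ℕ → ℝ := fun k => ((n.choose k : ℝ)) * (-1) ^ k * skewHarm k with hg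
  have step : ∀ k ∈ range (n + 1),
      f (k + 1) = (g (k + 1) - g k) - (n.choose k : ℝ) / ((k : ℝ) + 1) := by
    intro k _
    have hc : (((n+1).choose (k+1) : ℕ) : ℝ) = (n.choose k : ℝ) + (n.choose (k+1) : ℝ) := by
      rw [Nat.choose_succ_succ]; push_cast; ring
    have hsq : (-1 : ℝ) ^ k * (-1) ^ k = 1 := by
      rw [← pow_add]; exact Even.neg_one_pow ⟨k, rfl⟩
    have hk : ((k : ℝ) + 1) ≠ 0 := by positivity
    simp only [hf, hg, hc, skewHarm_succ]
    linear_combination (-((n.choose k : ℝ)) / ((k : ℝ) + 1)) * hsq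
  rw [Finset.sum_range_succ' f (n + 1)]
  have hf0 : f 0 = 0 := by simp [hf, skewHarm]
  rw [Finset.sum_congr rfl step, hf0, add_zero, Finset.sum_sub_distrib,
    Finset.sum_range_sub g (n+1), choose_div]
  have : g (n + 1) = 0 := by simp [hg, Nat.choose_succ_self]
  rw [this]
  have : g 0 = 0 := by simp [hg, skewHarm]
  rw [this]
  ring

open MeasureTheory

noncomputable def Fc (k : ℕ) (t : ℝ) : ℝ := ((-1) ^ k / (Nat.factorial (k+1) : ℝ)) * t ^ k

lemma Fc_hasSum {t : ℝ} (ht : t ≠ 0) : HasSum (fun k => Fc k t) ((1 - Real.exp (-t)) / t) := by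
  have h : HasSum (fun n : ℕ => (-t) ^ (n+1) / (Nat.factorial (n+1) : ℝ)) (Real.exp (-t) - 1) :=
    (hasSum_nat_add_iff (f := fun n : ℕ => (-t) ^ n / (Nat.factorial n : ℝ)) 1).mpr
      (by simpa using hasSum_exp' (-t))
  have h2 := h.mul_left (-1 / t)
  have hfun : (fun n : ℕ => (-1 / t) * ((-t) ^ (n + 1) / (Nat.factorial (n+1) : ℝ)))
      = fun k => Fc k t := by
    funext k
    have : (-t) ^ (k+1) = (-1)^(k+1) * t^(k+1) := by rw [neg_eq_neg_one_mul t, mul_pow]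
    rw [this, Fc]
    field_simp
    ring
  rw [hfun] at h2
  convert h2 using 1
  · rfl
  ring

lemma intSeries (a b : ℝ) (hab : a ≤ b) :
    HasSum (fun k => ∫ t in a..b, Fc k t) (∫ t in a..b, (1 - Real.exp (-t)) / t) := by
  have hC : ∀ t ∈ Set.Ioc a b, |t| ≤ max |a| |b| := fun t ht =>
    abs_le.mpr ⟨le_trans (neg_le_neg (le_max_left |a| |b|)) (le_trans (neg_abs_le a) ht.1.le),
      le_trans ht.2 (le_trans (le_abs_self b) (le_max_right _ _))⟩
  set C := max |a| |b| with hCdef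
  have hC0 : 0 ≤ C := le_trans (abs_nonneg a) (le_max_left _ _)
  have hcont : ∀ k : ℕ, Continuous (Fc k) := fun k => continuous_const.mul (continuous_pow k)
  have hint : ∀ k : ℕ, Integrable (Fc k) (volume.restrict (Set.Ioc a b)) := fun k =>
    ((hcont k).integrableOn_Ioc)
  have hsum : Summable fun k => ∫ t in Set.Ioc a b, ‖Fc k t‖ := by
    refine Summable.of_nonneg_of_le (fun k => integral_nonneg (fun t => norm_nonneg _))
      (fun k => ?_) ((Real.summable_pow_div_factorial C).mul_right (b - a))
    · skip
      have hb : ∀ t ∈ Set.Ioc a b, ‖‖Fc k t‖‖ ≤ C ^ k / (Nat.factorial k : ℝ) := by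
        intro t ht
        rw [norm_norm, Fc, norm_mul, norm_div]
        simp only [norm_pow, norm_neg, norm_one, one_pow, Real.norm_natCast, Real.norm_eq_abs,
          Nat.abs_cast]
        rw [one_div, mul_comm]
        have h1 : |t| ^ k ≤ C ^ k := pow_le_pow_left₀ (abs_nonneg t) (hC t ht) k
        have h2 : ((Nat.factorial (k+1) : ℝ))⁻¹ ≤ ((Nat.factorial k : ℝ))⁻¹ := by
          apply inv_anti₀
          · exact_mod_cast Nat.factorial_pos k
          · exact_mod_cast Nat.factorial_le (Nat.le_succ k)
        calc |t| ^ k * ((Nat.factorial (k+1) : ℝ))⁻¹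
            ≤ C ^ k * ((Nat.factorial k : ℝ))⁻¹ := by
              apply mul_le_mul h1 h2 (by positivity) (by positivity)
          _ = C ^ k / (Nat.factorial k : ℝ) := by rw [div_eq_mul_inv]
      have := MeasureTheory.norm_setIntegral_le_of_norm_le_const (μ := volume)
        (s := Set.Ioc a b) (f := fun t => ‖Fc k t‖)
        (by rw [Real.volume_Ioc]; exact ENNReal.ofReal_lt_top) hb
      rw [Real.norm_eq_abs, abs_of_nonneg (integral_nonneg (fun t => norm_nonneg _))] at this
      refine this.trans ?_
      rw [Real.volume_real_Ioc_of_le hab]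
  have H := MeasureTheory.hasSum_integral_of_summable_integral_norm hint hsum
  have heq : ∫ t in Set.Ioc a b, ∑' k, Fc k t = ∫ t in Set.Ioc a b, (1 - Real.exp (-t)) / t := by
    apply integral_congr_ae
    apply ae_restrict_of_ae
    have h0 : ∀ᵐ t : ℝ, t ≠ 0 := by
      rw [ae_iff]
      simp only [ne_eq, not_not, Set.setOf_eq_eq_singleton]
      exact measure_singleton 0
    filter_upwards [h0] with t ht
    exact (Fc_hasSum ht).tsum_eq
  rw [heq] at H
  simpa only [intervalIntegral.integral_of_le hab] using H

lemma Ein_hasSum (z : ℝ) :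
    HasSum (fun k : ℕ => (-1) ^ k * z ^ (k+1) / (((k:ℝ)+1) * (Nat.factorial (k+1) : ℝ)))
      (Ein z) := by
  have hval : (fun k : ℕ => ∫ t in (0:ℝ)..z, Fc k t)
      = fun k : ℕ => (-1) ^ k * z ^ (k+1) / (((k:ℝ)+1) * (Nat.factorial (k+1) : ℝ)) := by
    funext k
    show (∫ t in (0:ℝ)..z, (((-1:ℝ)) ^ k / (Nat.factorial (k+1) : ℝ)) * t ^ k) = _
    rw [intervalIntegral.integral_const_mul, integral_pow]
    have h1 : ((Nat.factorial (k+1):ℝ)) ≠ 0 := by positivity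
    have h2 : ((k:ℝ)+1) ≠ 0 := by positivity
    rw [zero_pow (Nat.succ_ne_zero k), sub_zero]
    field_simp
  rcases le_or_gt 0 z with hz | hz
  · have H := intSeries 0 z hz
    rw [hval] at H
    exact H
  · have H := (intSeries z 0 hz.le).neg
    have h1 : (fun k : ℕ => -(∫ t in z..(0:ℝ), Fc k t)) = fun k : ℕ => ∫ t in (0:ℝ)..z, Fc k t := by
      funext k; rw [intervalIntegral.integral_symm, neg_neg]
    have h2 : -(∫ t in z..(0:ℝ), (1 - Real.exp (-t)) / t) = Ein z := by
      rw [Ein, intervalIntegral.integral_symm, neg_neg]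
    rw [h1, h2] at H
    rw [hval] at H
    exact H

section GenFun
variable (y : ℝ)

noncomputable def Gse (m : ℕ) : ℝ := skewHarm m * y ^ m / (Nat.factorial m : ℝ)

noncomputable def Ese (k : ℕ) : ℝ := (-y) ^ k / (Nat.factorial k : ℝ)

noncomputable def Bse (n : ℕ) : ℝ :=
  (-1) ^ (n+1) * ((2:ℝ) ^ n - 1) * y ^ n / ((n : ℝ) * (Nat.factorial n : ℝ))

lemma Gse_norm_summable : Summable fun m => ‖Gse y m‖ := by
  refine Summable.of_nonneg_of_le (fun m => norm_nonneg _) (fun m => ?_)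
    (Real.summable_pow_div_factorial (2 * |y|))
  rw [Gse, norm_div, Real.norm_eq_abs, Real.norm_eq_abs, abs_mul, abs_pow,
    Nat.abs_cast]
  have h1 : |skewHarm m| * |y| ^ m ≤ (2 * |y|) ^ m := by
    rw [mul_pow]
    have := abs_skewHarm_le m
    have hm2 : (m : ℝ) ≤ 2 ^ m := by exact_mod_cast (Nat.lt_two_pow_self (n := m)).le
    have : |skewHarm m| ≤ (2:ℝ)^m := this.trans hm2
    exact mul_le_mul_of_nonneg_right this (pow_nonneg (abs_nonneg y) m)
  exact div_le_div_of_nonneg_right h1 (by positivity)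

lemma Ese_norm_summable : Summable fun k => ‖Ese y k‖ := by
  refine Summable.of_nonneg_of_le (fun m => norm_nonneg _) (fun m => ?_)
    (Real.summable_pow_div_factorial |y|)
  rw [Ese, norm_div, Real.norm_eq_abs, Real.norm_eq_abs, abs_pow, abs_neg, Nat.abs_cast]

lemma conv_eq (n : ℕ) : ∑ k ∈ range (n+1), Ese y k * Gse y (n-k) = Bse y n := by
  cases n with
  | zero => simp [Ese, Gse, Bse, skewHarm]
  | succ n =>
    rw [← Finset.sum_range_reflect]
    have hterm : ∀ j ∈ range (n+2), Ese y (n + 2 - 1 - j) * Gse y ((n+1) - (n + 2 - 1 - j))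
        = (((n+1).choose j : ℝ) * (-1)^j * skewHarm j)
            * ((-1)^(n+1) * y^(n+1) / (Nat.factorial (n+1) : ℝ)) := by
      intro j hj
      have hj' : j ≤ n + 1 := by
        have := Finset.mem_range.mp hj; omega
      have hidx : n + 2 - 1 - j = n + 1 - j := by omega
      have hmj : (n+1) - (n+1-j) = j := by omega
      rw [hidx, hmj]
      set m := n + 1 - j with hmdef
      have hm : m + j = n + 1 := by omega
      have hfact : (((n+1).choose j : ℕ) : ℝ) * (Nat.factorial j : ℝ) * (Nat.factorial m : ℝ)
          = (Nat.factorial (n+1) : ℝ) := by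
        exact_mod_cast congrArg (Nat.cast (R := ℝ))
          (Nat.choose_mul_factorial_mul_factorial hj')
      have hy : y ^ m * y ^ j = y ^ (n+1) := by rw [← pow_add, hm]
      have hsq : (-1 : ℝ) ^ j * (-1) ^ j = 1 := by
        rw [← pow_add]; exact Even.neg_one_pow ⟨j, rfl⟩
      have hsign : (-1:ℝ)^(n+1) * (-1)^j = (-1)^m := by
        rw [← hm, pow_add]
        linear_combination ((-1:ℝ)^m) * hsq
      have hj0 : (Nat.factorial j : ℝ) ≠ 0 := by positivity
      have hm0 : (Nat.factorial m : ℝ) ≠ 0 := by positivity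
      have hC0 : (((n+1).choose j : ℕ) : ℝ) ≠ 0 := by
        have := Nat.choose_pos hj'; positivity
      rw [Ese, Gse, neg_pow, ← hfact, ← hy]
      field_simp
      linear_combination (-(skewHarm j * y^m * y^j)) * hsign
    rw [Finset.sum_congr rfl hterm, ← Finset.sum_mul, keyU n, Bse]
    have h1 : ((n:ℝ) + 1) ≠ 0 := by positivity
    have h2 : (Nat.factorial (n+1) : ℝ) ≠ 0 := by positivity
    push_cast
    field_simp
    ring

lemma Bse_hasSum : HasSum (Bse y) (Ein (2*y) - Ein y) := by
  have h2 := (Ein_hasSum (2*y)).sub (Ein_hasSum y)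
  have hfun : (fun k : ℕ => (-1)^k * (2*y)^(k+1) / (((k:ℝ)+1) * (Nat.factorial (k+1) : ℝ))
        - (-1)^k * y^(k+1) / (((k:ℝ)+1) * (Nat.factorial (k+1) : ℝ)))
      = fun k : ℕ => Bse y (k+1) := by
    funext k
    rw [Bse, mul_pow]
    have h1 : ((k:ℝ) + 1) ≠ 0 := by positivity
    have h2 : (Nat.factorial (k+1) : ℝ) ≠ 0 := by positivity
    push_cast
    field_simp
    ring
  rw [hfun] at h2
  have := (hasSum_nat_add_iff (f := Bse y) 1).mp h2
  simpa [Bse] using this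

lemma Gse_hasSum : HasSum (Gse y) (Real.exp y * (Ein (2*y) - Ein y)) := by
  have he : HasSum (Ese y) (Real.exp (-y)) := hasSum_exp' (-y)
  have H1 := hasSum_sum_range_mul_of_summable_norm (Ese_norm_summable y) (Gse_norm_summable y)
  rw [funext (conv_eq y)] at H1
  have hEq : (∑' k, Ese y k) * (∑' m, Gse y m) = Ein (2*y) - Ein y := H1.unique (Bse_hasSum y)
  rw [he.tsum_eq] at hEq
  have hsG : Summable (Gse y) := (Gse_norm_summable y).of_norm
  have hval : ∑' m, Gse y m = Real.exp y * (Ein (2*y) - Ein y) := by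
    rw [← hEq, ← mul_assoc, ← Real.exp_add]
    simp
  exact hval ▸ hsG.hasSum

end GenFun

section Main
variable (y : ℝ)

noncomputable def gg (p : ℕ × ℕ) : ℝ :=
  skewHarm (p.1 + 1) * (y ^ (p.2 + (p.1 + 2)) / (Nat.factorial (p.2 + (p.1 + 2)) : ℝ))

lemma gg_summable : Summable (gg y) := by
  set f : ℕ → ℝ := fun n => ((n : ℝ) + 1) * |y| ^ (n + 2) / (Nat.factorial (n + 2) : ℝ) with hfdef
  set g : ℕ → ℝ := fun i => |y| ^ i / (Nat.factorial i : ℝ) with hgdef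
  have hf : Summable f := by
    refine Summable.of_nonneg_of_le (fun n => by positivity) (fun n => ?_)
      ((Real.summable_pow_div_factorial (2 * |y|)).comp_injective (add_left_injective 2))
    show ((n : ℝ) + 1) * |y| ^ (n + 2) / (Nat.factorial (n + 2) : ℝ)
        ≤ (2 * |y|) ^ (n + 2) / (Nat.factorial (n + 2) : ℝ)
    apply div_le_div_of_nonneg_right _ (by positivity)
    rw [mul_pow]
    apply mul_le_mul_of_nonneg_right _ (pow_nonneg (abs_nonneg y) _)
    have : (n : ℝ) + 1 ≤ (2 : ℝ) ^ n * 4 := by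
      have h2 : (n : ℝ) < 2 ^ n := by exact_mod_cast Nat.lt_two_pow_self (n := n)
      have h3 : (1:ℝ) ≤ 2 ^ n := one_le_pow₀ (by norm_num)
      linarith
    calc (n : ℝ) + 1 ≤ 2 ^ n * 4 := this
      _ = 2 ^ (n + 2) := by ring
  have hg : Summable g := Real.summable_pow_div_factorial |y|
  refine Summable.of_norm_bounded (g := fun p : ℕ × ℕ => f p.1 * g p.2)
    (Summable.mul_of_nonneg hf hg (fun n => by positivity) (fun i => by positivity)) (fun p => ?_)
  obtain ⟨n, i⟩ := p
  rw [gg, norm_mul, norm_div]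
  simp only [Real.norm_eq_abs, abs_pow, Nat.abs_cast]
  have hskew : |skewHarm (n + 1)| ≤ (n : ℝ) + 1 := by
    have := abs_skewHarm_le (n + 1); push_cast at this ⊢; linarith
  have hfct : ((Nat.factorial (n + 2) : ℝ)) * (Nat.factorial i : ℝ)
      ≤ (Nat.factorial (i + (n + 2)) : ℝ) := by
    have hd : Nat.factorial (n+2) * Nat.factorial i ≤ Nat.factorial (n + 2 + i) :=
      Nat.le_of_dvd (Nat.factorial_pos _) (Nat.factorial_mul_factorial_dvd_factorial_add _ _)
    have : n + 2 + i = i + (n + 2) := by omega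
    rw [this] at hd
    exact_mod_cast hd
  have hpow : |y| ^ (i + (n + 2)) = |y| ^ (n + 2) * |y| ^ i := by
    rw [← pow_add]; congr 1; omega
  calc |skewHarm (n + 1)| * (|y| ^ (i + (n + 2)) / (Nat.factorial (i + (n + 2)) : ℝ))
      ≤ ((n:ℝ) + 1) * (|y| ^ (i + (n + 2)) / ((Nat.factorial (n + 2) : ℝ) * (Nat.factorial i : ℝ))) := by
        apply mul_le_mul hskew _ (by positivity) (by positivity)
        exact div_le_div_of_nonneg_left (by positivity) (by positivity) hfct
    _ = f n * g i := by rw [hpow, hfdef, hgdef]; field_simp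

lemma gg_fiber (n : ℕ) :
    HasSum (fun i => gg y (n, i))
      (skewHarm (n + 1) * (Real.exp y - ∑ j ∈ Finset.range (n + 2), y ^ j / (Nat.factorial j : ℝ))) := by
  have h : HasSum (fun i : ℕ => y ^ (i + (n + 2)) / (Nat.factorial (i + (n + 2)) : ℝ))
      (Real.exp y - ∑ j ∈ Finset.range (n + 2), y ^ j / (Nat.factorial j : ℝ)) := by
    refine (hasSum_nat_add_iff (f := fun j : ℕ => y ^ j / (Nat.factorial j : ℝ)) (n + 2)).mpr ?_
    simpa using hasSum_exp' y
  exact h.mul_left _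

lemma term_hasSum :
    HasSum (fun n : ℕ => skewHarm (n + 1) *
        (Real.exp y - ∑ j ∈ Finset.range (n + 2), y ^ j / (Nat.factorial j : ℝ)))
      (∑' p, gg y p) :=
  HasSum.prod_fiberwise (gg_summable y).hasSum (gg_fiber y)

noncomputable def Ase (j : ℕ) : ℝ := y * Gse y (j + 1)

noncomputable def Cse (j : ℕ) : ℝ :=
  (1 + (-1 : ℝ) ^ j) / 2 * (y ^ (j + 2) / (Nat.factorial (j + 2) : ℝ))

lemma row_hasSum : HasSum (fun j => Ase y j - Cse y j) (∑' p, gg y p) := by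
  have hsig : HasSum ((gg y) ∘ (Finset.HasAntidiagonal.sigmaAntidiagonalEquivProd (A := ℕ)))
      (∑' p, gg y p) := (Equiv.hasSum_iff _).mpr (gg_summable y).hasSum
  refine HasSum.sigma hsig (fun j => ?_)
  have hfin := Finset.hasSum (Finset.HasAntidiagonal.antidiagonal j) (gg y)
  have hrow : ∑ p ∈ Finset.HasAntidiagonal.antidiagonal j, gg y p = Ase y j - Cse y j := by
    rw [Finset.Nat.sum_antidiagonal_eq_sum_range_succ_mk]
    have hterm : ∀ k ∈ Finset.range (j + 1),
        gg y (k, j - k) = skewHarm (k + 1) * (y ^ (j + 2) / (Nat.factorial (j + 2) : ℝ)) := by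
      intro k hk
      have hk' : k ≤ j := by have := Finset.mem_range.mp hk; omega
      rw [gg]
      have : j - k + (k + 2) = j + 2 := by omega
      rw [this]
    rw [Finset.sum_congr rfl hterm, ← Finset.sum_mul, sumSkew (j + 1)]
    rw [Ase, Cse, Gse]
    have hfs : (Nat.factorial (j+2) : ℝ) = ((j:ℝ)+2) * (Nat.factorial (j+1) : ℝ) := by
      rw [show j+2 = (j+1)+1 from rfl, Nat.factorial_succ]; push_cast; ring
    push_cast
    rw [hfs]
    have h0 : (Nat.factorial (j+1) : ℝ) ≠ 0 := by positivity
    have h2 : ((j:ℝ)+2) ≠ 0 := by positivity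
    field_simp
    ring
  exact hrow ▸ hfin

lemma Ase_hasSum : HasSum (Ase y) (y * Real.exp y * (Ein (2 * y) - Ein y)) := by
  have h1 : HasSum (fun j => Gse y (j + 1)) (Real.exp y * (Ein (2 * y) - Ein y)) := by
    refine (hasSum_nat_add_iff (f := Gse y) 1).mpr ?_
    simpa [Gse, skewHarm] using Gse_hasSum y
  have h2 := h1.mul_left y
  show HasSum (fun j => Ase y j) _
  simpa [Ase, mul_assoc] using h2

lemma Cse_hasSum : HasSum (Cse y) (Real.cosh y - 1) := by
  set D : ℕ → ℝ := fun m => (y ^ m / (Nat.factorial m : ℝ) + (-y) ^ m / (Nat.factorial m : ℝ)) / 2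
    with hD
  have hDsum : HasSum D (Real.cosh y) := by
    rw [Real.cosh_eq]
    exact ((hasSum_exp' y).add (hasSum_exp' (-y))).div_const 2
  have h2 : HasSum (fun j => D (j + 2)) (Real.cosh y - 1) := by
    refine (hasSum_nat_add_iff (f := D) 2).mpr ?_
    have : Real.cosh y - 1 + ∑ i ∈ Finset.range 2, D i = Real.cosh y := by
      rw [Finset.sum_range_succ, Finset.sum_range_one, hD]
      norm_num
    rw [this]
    exact hDsum
  have hfun : (fun j => D (j + 2)) = Cse y := by
    funext j
    simp only [hD, Cse]
    rw [neg_pow]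
    ring
  rwa [hfun] at h2

theorem stmt10 (y : ℝ) :
    HasSum (fun n : ℕ =>
        skewHarm (n + 1) *
          (Real.exp y - ∑ j ∈ Finset.range (n + 2), y ^ j / (Nat.factorial j : ℝ)))
      (y * Real.exp y * (Ein (2 * y) - Ein y) - Real.cosh y + 1) := by
  have h1 := term_hasSum y
  have h2 := row_hasSum y
  have h3 := (Ase_hasSum y).sub (Cse_hasSum y)
  have h4 : ∑' p, gg y p = y * Real.exp y * (Ein (2 * y) - Ein y) - Real.cosh y + 1 := by
    rw [h2.unique h3]; ring
  rwa [h4] at h1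


end Main
end

section
/- For real x > 0, the series ∑_{n=1}^∞ (H_n − log(n+x−1) − γ + x/n − 3/(2n)) converges and equals γ·x + log Γ(x) + (1 − γ − log(2π))/2. -/
open Real Filter Finset Topology

/-- n-th harmonic number H_n = ∑_{k=1}^n 1/k. -/
noncomputable def harm (n : ℕ) : ℝ := ∑ k ∈ Finset.range n, 1 / ((k : ℝ) + 1)

namespace Stmt16Aux

local notation "γ" => Real.eulerMascheroniConstant

lemma log_quad {t : ℝ} (ht : |t| ≤ 1/2) : |Real.log (1+t) - t| ≤ 2 * t^2 := by
  have h1 : |(-t)| < 1 := by rw [abs_neg]; linarith [abs_nonneg t]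
  have := Real.abs_log_sub_add_sum_range_le h1 1
  simp only [Finset.sum_range_one, pow_one, Nat.cast_zero, zero_add, div_one,
    sub_neg_eq_add] at this
  rw [abs_neg] at this
  have h2 : |(-t)| ^ 2 / (1 - |(-t)|) ≤ 2 * t ^ 2 := by
    rw [abs_neg]
    rcases eq_or_ne t 0 with rfl | ht0
    · simp
    · have h3 : (0:ℝ) < 1 - |t| + |t| := by rw [sub_add_cancel]; norm_num
      have h4 : (1:ℝ)/2 ≤ 1 - |t| := by linarith
      have h5 : (0:ℝ) < |t| ^ 2 := by positivity
      rw [div_le_iff₀ (by linarith)]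
      calc |t|^2 = t^2 := sq_abs t
        _ ≤ 2 * t^2 * (1/2) := le_of_eq (by ring)
        _ ≤ 2 * t^2 * (1 - |t|) := by nlinarith
  calc |Real.log (1+t) - t| = |(-t) + Real.log (1 + t)| := congrArg abs (by ring)
    _ ≤ |(-t)|^2 / (1 - |(-t)|) := by
        have := Real.abs_log_sub_add_sum_range_le h1 1
        simpa [Finset.sum_range_one, sub_neg_eq_add] using this
    _ ≤ 2 * t^2 := h2

lemma log_cubic {t : ℝ} (ht : |t| ≤ 1/2) : |Real.log (1+t) - t + t^2/2| ≤ 2 * |t|^3 := by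
  have h1 : |(-t)| < 1 := by rw [abs_neg]; linarith [abs_nonneg t]
  have key := Real.abs_log_sub_add_sum_range_le h1 2
  have hs : ∑ i ∈ Finset.range 2, (-t) ^ (i + 1) / (i + 1) = -t + t^2/2 := by
    simp [Finset.sum_range_succ]
    ring
  rw [hs, sub_neg_eq_add, abs_neg] at key
  have h2 : |t| ^ (2+1) / (1 - |t|) ≤ 2 * |t|^3 := by
    rcases eq_or_ne t 0 with rfl | ht0
    · simp
    · have h4 : (1:ℝ)/2 ≤ 1 - |t| := by linarith
      have h5 : (0:ℝ) < |t| ^ 3 := by positivity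
      rw [div_le_iff₀ (by linarith)]
      have : |t| ^ (2+1) = |t|^3 := by norm_num
      rw [this]
      nlinarith [h5]
  calc |Real.log (1+t) - t + t^2/2| = |(-t + t^2/2) + Real.log (1 + t)| := by
        rw [show -t + t^2/2 + Real.log (1+t) = Real.log (1+t) - t + t^2/2 by ring]
    _ ≤ |t| ^ (2+1) / (1 - |t|) := key
    _ ≤ 2 * |t|^3 := h2


noncomputable def d (k : ℕ) : ℝ := 1/((k:ℝ)+1) - Real.log (((k:ℝ)+2)/((k:ℝ)+1))

lemma harm_eq (n : ℕ) : harm n = ((harmonic n : ℚ) : ℝ) := by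
  unfold harm harmonic
  push_cast
  simp [one_div]

lemma sum_d (n : ℕ) : ∑ k ∈ Finset.range n, d k = Real.eulerMascheroniSeq n := by
  induction n with
  | zero => simp [Real.eulerMascheroniSeq]
  | succ n ih =>
    rw [Finset.sum_range_succ, ih]
    unfold Real.eulerMascheroniSeq d
    rw [harmonic_succ]
    have h1 : (0:ℝ) < (n:ℝ) + 1 := by positivity
    have h2 : (0:ℝ) < (n:ℝ) + 2 := by positivity
    rw [Real.log_div (by positivity) (by positivity)]
    push_cast
    ring

lemma d_log_eq (k : ℕ) : Real.log (((k:ℝ)+2)/((k:ℝ)+1)) = Real.log (1 + 1/((k:ℝ)+1)) := by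
  have h : ((k:ℝ)+1) ≠ 0 := by positivity
  rw [show (1:ℝ) + 1/((k:ℝ)+1) = ((k:ℝ)+2)/((k:ℝ)+1) by field_simp; ring]

lemma d_nonneg (k : ℕ) : 0 ≤ d k := by
  unfold d
  rw [d_log_eq]
  have h1 : (0:ℝ) < 1/((k:ℝ)+1) := by positivity
  have := Real.log_le_sub_one_of_pos (show (0:ℝ) < 1 + 1/((k:ℝ)+1) by linarith)
  linarith

lemma d_est (k : ℕ) (hk : 1 ≤ k) : |d k - 1/(2*((k:ℝ)+1)^2)| ≤ 2/((k:ℝ)+1)^3 := by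
  unfold d
  rw [d_log_eq]
  set t : ℝ := 1/((k:ℝ)+1) with ht
  have hk1 : (2:ℝ) ≤ (k:ℝ)+1 := by exact_mod_cast Nat.succ_le_succ hk
  have htpos : 0 < t := by positivity
  have hthalf : |t| ≤ 1/2 := by
    rw [abs_of_pos htpos, ht]
    rw [div_le_div_iff₀ (by linarith) (by norm_num)]
    linarith
  have key := Stmt16Aux.log_cubic hthalf
  have e1 : t - Real.log (1+t) - 1/(2*((k:ℝ)+1)^2) = -(Real.log (1+t) - t + t^2/2) := by
    rw [ht]; field_simp; ring
  rw [e1, abs_neg]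
  have e2 : 2 * |t|^3 = 2/((k:ℝ)+1)^3 := by
    rw [abs_of_pos htpos, ht]
    field_simp
  rw [e2] at key
  exact key

lemma summable_d : Summable d := by
  apply summable_of_sum_range_le d_nonneg (c := 1)
  intro n
  rw [sum_d]
  have h := Real.eulerMascheroniSeq_lt_eulerMascheroniSeq' n 1
  rw [Real.eulerMascheroniSeq'_one] at h
  exact h.le

lemma tsum_d : ∑' k, d k = γ := by
  have h1 : Filter.Tendsto (fun n => ∑ k ∈ Finset.range n, d k) atTop (𝓝 (∑' k, d k)) :=
    summable_d.hasSum.tendsto_sum_nat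
  have h2 : Filter.Tendsto (fun n => ∑ k ∈ Finset.range n, d k) atTop (𝓝 γ) := by
    simp only [sum_d]
    exact Real.tendsto_eulerMascheroniSeq
  exact tendsto_nhds_unique h1 h2

lemma gamma_sub_seq (n : ℕ) : γ - Real.eulerMascheroniSeq n = ∑' k, d (k + n) := by
  have := Summable.sum_add_tsum_nat_add n summable_d
  rw [tsum_d, sum_d] at this
  linarith
lemma d_le_pt (j : ℕ) (hj : 1 ≤ j) :
    d j ≤ 1/(2*(j:ℝ)*((j:ℝ)+1)) + (1/((j:ℝ)*((j:ℝ)+1)) - 1/(((j:ℝ)+1)*((j:ℝ)+2))) := by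
  have h := d_est j hj
  have hj1 : (1:ℝ) ≤ (j:ℝ) := by exact_mod_cast hj
  have h1 := (abs_le.1 h).2
  have e1 : 1/(2*((j:ℝ)+1)^2) ≤ 1/(2*(j:ℝ)*((j:ℝ)+1)) := by
    rw [div_le_div_iff₀ (by positivity) (by positivity)]
    nlinarith
  have e2 : 1/((j:ℝ)*((j:ℝ)+1)) - 1/(((j:ℝ)+1)*((j:ℝ)+2)) = 2/((j:ℝ)*((j:ℝ)+1)*((j:ℝ)+2)) := by
    field_simp
    ring
  have e3 : 2/((j:ℝ)+1)^3 ≤ 2/((j:ℝ)*((j:ℝ)+1)*((j:ℝ)+2)) := by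
    rw [div_le_div_iff₀ (by positivity) (by positivity)]
    nlinarith
  rw [e2]
  linarith

lemma d_ge_pt (j : ℕ) (hj : 1 ≤ j) :
    (1/(2*((j:ℝ)+1)) - 1/(2*((j:ℝ)+2))) - (1/((j:ℝ)*((j:ℝ)+1)) - 1/(((j:ℝ)+1)*((j:ℝ)+2))) ≤ d j := by
  have h := d_est j hj
  have hj1 : (1:ℝ) ≤ (j:ℝ) := by exact_mod_cast hj
  have h1 := (abs_le.1 h).1
  have e1 : 1/(2*((j:ℝ)+1)) - 1/(2*((j:ℝ)+2)) ≤ 1/(2*((j:ℝ)+1)^2) := by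
    have e : 1/(2*((j:ℝ)+1)) - 1/(2*((j:ℝ)+2)) = 1/(2*((j:ℝ)+1)*((j:ℝ)+2)) := by
      field_simp; ring
    rw [e, div_le_div_iff₀ (by positivity) (by positivity)]
    nlinarith
  have e2 : 1/((j:ℝ)*((j:ℝ)+1)) - 1/(((j:ℝ)+1)*((j:ℝ)+2)) = 2/((j:ℝ)*((j:ℝ)+1)*((j:ℝ)+2)) := by
    field_simp
    ring
  have e3 : 2/((j:ℝ)+1)^3 ≤ 2/((j:ℝ)*((j:ℝ)+1)*((j:ℝ)+2)) := by
    rw [div_le_div_iff₀ (by positivity) (by positivity)]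
    nlinarith
  rw [e2]
  linarith

lemma tail_le (n : ℕ) (hn : 1 ≤ n) :
    ∑' k, d (k + n) ≤ 1/(2*(n:ℝ)) + 1/((n:ℝ)*((n:ℝ)+1)) := by
  have hn1 : (1:ℝ) ≤ (n:ℝ) := by exact_mod_cast hn
  apply tsum_le_of_sum_range_le (fun k => d_nonneg _)
  intro K
  set f1 : ℕ → ℝ := fun k => 1/(2*((n:ℝ)+k)) with hf1
  set f2 : ℕ → ℝ := fun k => 1/(((n:ℝ)+k)*((n:ℝ)+k+1)) with hf2
  have hstep : ∀ k ∈ Finset.range K, d (k + n) ≤ (f1 k - f1 (k+1)) + (f2 k - f2 (k+1)) := by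
    intro k _
    have := d_le_pt (k + n) (by omega)
    have hc : ((k + n : ℕ) : ℝ) = (n:ℝ) + k := by push_cast; ring
    rw [hc] at this
    refine le_trans this (le_of_eq ?_)
    simp only [hf1, hf2]
    push_cast
    have h1 : ((n:ℝ)+k) ≠ 0 := by positivity
    have h2 : ((n:ℝ)+k+1) ≠ 0 := by positivity
    have h3 : ((n:ℝ)+k+2) ≠ 0 := by positivity
    field_simp
    ring
  calc ∑ k ∈ Finset.range K, d (k + n)
      ≤ ∑ k ∈ Finset.range K, ((f1 k - f1 (k+1)) + (f2 k - f2 (k+1))) := Finset.sum_le_sum hstep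
    _ = (f1 0 - f1 K) + (f2 0 - f2 K) := by
        rw [Finset.sum_add_distrib, Finset.sum_range_sub' f1, Finset.sum_range_sub' f2]
    _ ≤ f1 0 + f2 0 := by
        have h1 : 0 ≤ f1 K := by simp only [hf1]; positivity
        have h2 : 0 ≤ f2 K := by simp only [hf2]; positivity
        linarith
    _ = 1/(2*(n:ℝ)) + 1/((n:ℝ)*((n:ℝ)+1)) := by simp [hf1, hf2]

lemma tail_ge (n : ℕ) (hn : 1 ≤ n) :
    1/(2*((n:ℝ)+1)) - 1/((n:ℝ)*((n:ℝ)+1)) ≤ ∑' k, d (k + n) := by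
  have hn1 : (1:ℝ) ≤ (n:ℝ) := by exact_mod_cast hn
  set g1 : ℕ → ℝ := fun k => 1/(2*((n:ℝ)+k+1)) with hg1
  set f2 : ℕ → ℝ := fun k => 1/(((n:ℝ)+k)*((n:ℝ)+k+1)) with hf2
  have hsummable : Summable (fun k => d (k + n)) := (summable_nat_add_iff n).2 summable_d
  have htendsto : Filter.Tendsto (fun K => ∑ k ∈ Finset.range K, d (k + n)) atTop
      (𝓝 (∑' k, d (k + n))) := hsummable.hasSum.tendsto_sum_nat
  have hlb : ∀ K : ℕ, (g1 0 - g1 K) - f2 0 ≤ ∑ k ∈ Finset.range K, d (k + n) := by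
    intro K
    have hstep : ∀ k ∈ Finset.range K, (g1 k - g1 (k+1)) - (f2 k - f2 (k+1)) ≤ d (k + n) := by
      intro k _
      have := d_ge_pt (k + n) (by omega)
      have hc : ((k + n : ℕ) : ℝ) = (n:ℝ) + k := by push_cast; ring
      rw [hc] at this
      simp only [hg1, hf2]
      push_cast
      convert this using 2 <;> ring
    calc (g1 0 - g1 K) - f2 0
        ≤ (g1 0 - g1 K) - (f2 0 - f2 K) := by
          have : 0 ≤ f2 K := by simp only [hf2]; positivity
          linarith
      _ = ∑ k ∈ Finset.range K, ((g1 k - g1 (k+1)) - (f2 k - f2 (k+1))) := by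
          rw [Finset.sum_sub_distrib, Finset.sum_range_sub' g1, Finset.sum_range_sub' f2]
      _ ≤ ∑ k ∈ Finset.range K, d (k + n) := Finset.sum_le_sum hstep
  have hg1K : Filter.Tendsto (fun K : ℕ => g1 K) atTop (𝓝 0) := by
    simp only [hg1, one_div]
    apply Filter.Tendsto.comp tendsto_inv_atTop_zero
    apply tendsto_atTop_mono (f := fun K : ℕ => (K:ℝ))
    · intro K; push_cast; linarith
    · exact tendsto_natCast_atTop_atTop
  have hc : Filter.Tendsto (fun K : ℕ => (g1 0 - g1 K) - f2 0) atTop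
      (𝓝 ((g1 0 - 0) - f2 0)) := ((tendsto_const_nhds.sub hg1K).sub tendsto_const_nhds)
  have := le_of_tendsto_of_tendsto' hc htendsto hlb
  have he : (g1 0 - 0) - f2 0 = 1/(2*((n:ℝ)+1)) - 1/((n:ℝ)*((n:ℝ)+1)) := by
    simp [hg1, hf2]
  linarith [he ▸ this]

lemma crux (n : ℕ) (hn : 2 ≤ n) :
    |harm n - Real.log n - γ - 1/(2*(n:ℝ))| ≤ 4/(n:ℝ)^2 := by
  have hn2 : (2:ℝ) ≤ (n:ℝ) := by exact_mod_cast hn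
  have hnpos : (0:ℝ) < (n:ℝ) := by linarith
  set nr : ℝ := (n:ℝ)
  set T : ℝ := ∑' k, d (k + n) with hT
  have hseq : Real.eulerMascheroniSeq n = harm n - Real.log (nr+1) := by
    rw [Real.eulerMascheroniSeq, harm_eq]
  have hgam : γ - (harm n - Real.log (nr+1)) = T := by
    rw [← hseq]; exact gamma_sub_seq n
  have hlog : Real.log (nr+1) - Real.log nr = Real.log (1 + 1/nr) := by
    rw [← Real.log_div (by positivity) (by positivity)]
    congr 1
    field_simp
  have hub := tail_le n (by omega)
  have hlb := tail_ge n (by omega)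
  have ha : 1/(nr*(nr+1)) ≤ 1/nr^2 := by
    rw [div_le_div_iff₀ (by positivity) (by positivity)]
    nlinarith
  have hb : 1/(2*nr) - 1/(2*(nr+1)) ≤ 1/nr^2 := by
    have e : 1/(2*nr) - 1/(2*(nr+1)) = 1/(2*nr*(nr+1)) := by field_simp; ring
    rw [e, div_le_div_iff₀ (by positivity) (by positivity)]
    nlinarith
  have habsT : |1/(2*nr) - T| ≤ 2/nr^2 := by
    rw [abs_le]
    constructor
    · have : 2/nr^2 = 1/nr^2 + 1/nr^2 := by ring
      rw [this]
      linarith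
    · have : 2/nr^2 = 1/nr^2 + 1/nr^2 := by ring
      rw [this]
      linarith
  have hq : |Real.log (1 + 1/nr) - 1/nr| ≤ 2 * (1/nr)^2 := by
    apply Stmt16Aux.log_quad
    rw [abs_of_pos (by positivity)]
    rw [div_le_div_iff₀ (by positivity) (by norm_num)]
    linarith
  have hq2 : 2 * (1/nr)^2 = 2/nr^2 := by field_simp
  rw [hq2] at hq
  have hc : 1/nr = 2*(1/(2*nr)) := by field_simp
  have key : harm n - Real.log nr - γ - 1/(2*nr)
      = (Real.log (1 + 1/nr) - 1/nr) + (1/(2*nr) - T) := by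
    linarith
  rw [key]
  calc |(Real.log (1 + 1/nr) - 1/nr) + (1/(2*nr) - T)|
      ≤ |Real.log (1 + 1/nr) - 1/nr| + |1/(2*nr) - T| := abs_add_le _ _
    _ ≤ 2/nr^2 + 2/nr^2 := add_le_add hq habsT
    _ = 4/nr^2 := by ring
noncomputable def A (x : ℝ) (n : ℕ) : ℝ :=
  harm (n + 1) - Real.log (((n : ℝ) + 1) + x - 1) - Real.eulerMascheroniConstant
    + x / ((n : ℝ) + 1) - 3 / (2 * ((n : ℝ) + 1))

lemma harm_succ (n : ℕ) : harm (n + 1) = harm n + 1/((n:ℝ)+1) := by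
  unfold harm
  rw [Finset.sum_range_succ]

lemma sum_formula (x : ℝ) (hx : 0 < x) (N : ℕ) :
    ∑ n ∈ Finset.range N, A x n
      = ((N:ℝ)+1)*harm N - N - Real.log (∏ n ∈ Finset.range N, (x + (n:ℝ)))
        - N*γ + (x - 3/2)*harm N := by
  induction N with
  | zero => simp [harm]
  | succ N ih =>
    have hP : (0:ℝ) < ∏ n ∈ Finset.range N, (x + (n:ℝ)) := by
      apply Finset.prod_pos
      intro i _
      positivity
    have hxN : (0:ℝ) < x + (N:ℝ) := by positivity
    rw [Finset.sum_range_succ, ih, Finset.prod_range_succ,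
      Real.log_mul hP.ne' hxN.ne']
    unfold A
    rw [show ((N:ℝ)+1) + x - 1 = x + (N:ℝ) by ring, harm_succ]
    have h1 : ((N:ℝ)+1) ≠ 0 := by positivity
    push_cast
    field_simp
    ring

lemma log_prod_eq (x : ℝ) (hx : 0 < x) (N : ℕ) (hN : 1 ≤ N) :
    Real.log (∏ n ∈ Finset.range (N+1), (x + (n:ℝ)))
      = x * Real.log N + Real.log (Nat.factorial N) - Real.log (Real.GammaSeq x N) := by
  have hNr : (0:ℝ) < (N:ℝ) := by exact_mod_cast hN
  have hP : (0:ℝ) < ∏ n ∈ Finset.range (N+1), (x + (n:ℝ)) := by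
    apply Finset.prod_pos; intro i _; positivity
  have hfac : (0:ℝ) < (Nat.factorial N : ℝ) := by exact_mod_cast Nat.factorial_pos N
  have hgs : Real.GammaSeq x N = (N:ℝ)^x * (Nat.factorial N) / ∏ n ∈ Finset.range (N+1), (x + (n:ℝ)) := rfl
  have h1 : Real.log (Real.GammaSeq x N)
      = Real.log ((N:ℝ)^x) + Real.log (Nat.factorial N) - Real.log (∏ n ∈ Finset.range (N+1), (x + (n:ℝ))) := by
    rw [hgs, Real.log_div (by positivity) hP.ne', Real.log_mul (by positivity) hfac.ne']
  rw [Real.log_rpow hNr] at h1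
  linarith

lemma log_factorial (N : ℕ) (hN : 1 ≤ N) :
    Real.log (Nat.factorial N) = Real.log (Stirling.stirlingSeq N)
      + (1/2)*(Real.log 2 + Real.log N) + (N:ℝ)*(Real.log N - 1) := by
  have hNr : (0:ℝ) < (N:ℝ) := by exact_mod_cast hN
  have hsq : (0:ℝ) < Real.sqrt (2*(N:ℝ)) := Real.sqrt_pos.mpr (by linarith)
  have hpow : (0:ℝ) < ((N:ℝ)/Real.exp 1)^N := by positivity
  have hfac : (0:ℝ) < (Nat.factorial N : ℝ) := by exact_mod_cast Nat.factorial_pos N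
  have hst : (Nat.factorial N : ℝ) = Stirling.stirlingSeq N * (Real.sqrt (2*(N:ℝ)) * ((N:ℝ)/Real.exp 1)^N) := by
    rw [Stirling.stirlingSeq]
    field_simp
  have hstpos : (0:ℝ) < Stirling.stirlingSeq N := by
    rw [Stirling.stirlingSeq]
    positivity
  rw [hst, Real.log_mul hstpos.ne' (by positivity), Real.log_mul hsq.ne' hpow.ne',
    Real.log_sqrt (by linarith), Real.log_pow, Real.log_div hNr.ne' (Real.exp_pos 1).ne',
    Real.log_exp, Real.log_mul (by norm_num) hNr.ne']
  ring
lemma tendsto_Nu :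
    Filter.Tendsto (fun N : ℕ => ((N:ℝ)+1) * (harm (N+1) - Real.log ((N:ℝ)+1) - γ))
      atTop (𝓝 (1/2)) := by
  have hz : Filter.Tendsto
      (fun N : ℕ => ((N:ℝ)+1) * (harm (N+1) - Real.log ((N:ℝ)+1) - γ) - 1/2)
      atTop (𝓝 0) := by
    apply squeeze_zero_norm' (a := fun N : ℕ => 4/((N:ℝ)+1))
    · filter_upwards [eventually_ge_atTop 1] with N hN
      have hcrux := crux (N+1) (by omega)
      have hc : ((N+1:ℕ):ℝ) = (N:ℝ)+1 := by push_cast; ring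
      rw [hc] at hcrux
      have hpos : (0:ℝ) < (N:ℝ)+1 := by positivity
      have e : ((N:ℝ)+1) * (harm (N+1) - Real.log ((N:ℝ)+1) - γ) - 1/2
          = ((N:ℝ)+1) * (harm (N+1) - Real.log ((N:ℝ)+1) - γ - 1/(2*((N:ℝ)+1))) := by
        field_simp
      rw [Real.norm_eq_abs, e, abs_mul, abs_of_pos hpos]
      calc ((N:ℝ)+1) * |harm (N+1) - Real.log ((N:ℝ)+1) - γ - 1/(2*((N:ℝ)+1))|
          ≤ ((N:ℝ)+1) * (4/((N:ℝ)+1)^2) := mul_le_mul_of_nonneg_left hcrux hpos.le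
        _ = 4/((N:ℝ)+1) := by field_simp
    · have h := tendsto_one_div_add_atTop_nhds_zero_nat (𝕜 := ℝ)
      have := h.const_mul (4:ℝ)
      simpa [mul_one_div, div_eq_mul_inv] using this
  have := hz.add_const (1/2)
  simpa using this

lemma tendsto_B1 (x : ℝ) :
    Filter.Tendsto (fun N : ℕ => ((N:ℝ)+x+1/2) * (harm (N+1) - Real.log ((N:ℝ)+1) - γ))
      atTop (𝓝 (1/2)) := by
  have hfrac : Filter.Tendsto (fun N : ℕ => 1 + (x-1/2)*(1/((N:ℝ)+1))) atTop (𝓝 1) := by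
    have h := tendsto_one_div_add_atTop_nhds_zero_nat (𝕜 := ℝ)
    have := (h.const_mul (x-1/2)).const_add 1
    simpa using this
  have hmul := hfrac.mul tendsto_Nu
  norm_num at hmul
  apply hmul.congr
  intro N
  have hpos : ((N:ℝ)+1) ≠ 0 := by positivity
  field_simp
  ring

lemma tendsto_B2 (x : ℝ) :
    Filter.Tendsto (fun N : ℕ => ((N:ℝ)+x+1/2) * (Real.log ((N:ℝ)+1) - Real.log (N:ℝ)))
      atTop (𝓝 1) := by
  have hN1 : Filter.Tendsto (fun N : ℕ => (N:ℝ) * Real.log (1 + 1/(N:ℝ))) atTop (𝓝 1) := by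
    have := (Real.tendsto_mul_log_one_add_div_atTop 1).comp
      (tendsto_natCast_atTop_atTop (R := ℝ))
    simpa [Function.comp_def] using this
  have hfrac : Filter.Tendsto (fun N : ℕ => 1 + (x+1/2)*(1/(N:ℝ))) atTop (𝓝 1) := by
    have h := tendsto_one_div_atTop_nhds_zero_nat (𝕜 := ℝ)
    have := (h.const_mul (x+1/2)).const_add 1
    simpa using this
  have hmul := hfrac.mul hN1
  norm_num at hmul
  apply Filter.Tendsto.congr' _ hmul
  filter_upwards [eventually_ge_atTop 1] with N hN
  have hNr : (0:ℝ) < (N:ℝ) := by exact_mod_cast hN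
  have hlog : Real.log ((N:ℝ)+1) - Real.log (N:ℝ) = Real.log (1 + 1/(N:ℝ)) := by
    rw [← Real.log_div (by positivity) hNr.ne']
    congr 1
    field_simp
  rw [hlog]
  field_simp
  ring

lemma tendsto_sum_A (x : ℝ) (hx : 0 < x) :
    Filter.Tendsto (fun N => ∑ n ∈ Finset.range N, A x n) atTop
      (𝓝 (γ*x + Real.log (Real.Gamma x) + (1 - γ - Real.log (2*Real.pi))/2)) := by
  apply (tendsto_add_atTop_iff_nat 1).1
  have hB3 : Filter.Tendsto (fun N : ℕ => Real.log (Stirling.stirlingSeq N)) atTop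
      (𝓝 (Real.log Real.pi / 2)) := by
    have h := Stirling.tendsto_stirlingSeq_sqrt_pi
    have hcont := (Real.continuousAt_log (Real.sqrt_pos.mpr Real.pi_pos).ne').tendsto
    have := hcont.comp h
    simpa [Function.comp_def, Real.log_sqrt Real.pi_pos.le] using this
  have hB4 : Filter.Tendsto (fun N : ℕ => Real.log (Real.GammaSeq x N)) atTop
      (𝓝 (Real.log (Real.Gamma x))) := by
    have h := Real.GammaSeq_tendsto_Gamma x
    exact ((Real.continuousAt_log (Real.Gamma_pos_of_pos hx).ne').tendsto).comp h
  have hconst : Filter.Tendsto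
      (fun N : ℕ => (x-1/2)*γ - 1 - Real.log (Stirling.stirlingSeq N)
        - (1/2)*Real.log 2 + Real.log (Real.GammaSeq x N)) atTop
      (𝓝 ((x-1/2)*γ - 1 - Real.log Real.pi / 2 - (1/2)*Real.log 2 + Real.log (Real.Gamma x))) :=
    ((tendsto_const_nhds.sub hB3).sub tendsto_const_nhds).add hB4
  have hE := (tendsto_B1 x).add ((tendsto_B2 x).add hconst)
  have hval : 1/2 + (1 + ((x-1/2)*γ - 1 - Real.log Real.pi / 2 - (1/2)*Real.log 2
      + Real.log (Real.Gamma x)))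
      = γ*x + Real.log (Real.Gamma x) + (1 - γ - Real.log (2*Real.pi))/2 := by
    rw [Real.log_mul two_ne_zero Real.pi_ne_zero]
    ring
  rw [hval] at hE
  apply Filter.Tendsto.congr' _ hE
  filter_upwards [eventually_ge_atTop 1] with N hN
  rw [sum_formula x hx (N+1), log_prod_eq x hx N hN, log_factorial N hN]
  push_cast
  ring

lemma A_decomp' (x : ℝ) (hx : 0 < x) (n : ℕ) : A x n
    = (harm (n+1) - Real.log ((n:ℝ)+1) - γ - 1/(2*((n:ℝ)+1)))
      - (Real.log (1 + (x-1)/((n:ℝ)+1)) - (x-1)/((n:ℝ)+1)) := by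
  have hm : (0:ℝ) < (n:ℝ)+1 := by positivity
  have hpos2 : (0:ℝ) < 1 + (x-1)/((n:ℝ)+1) := by
    have e : 1 + (x-1)/((n:ℝ)+1) = ((n:ℝ)+x)/((n:ℝ)+1) := by field_simp; ring
    rw [e]
    positivity
  have hsplit : Real.log (((n:ℝ)+1)+x-1)
      = Real.log ((n:ℝ)+1) + Real.log (1+(x-1)/((n:ℝ)+1)) := by
    rw [← Real.log_mul hm.ne' hpos2.ne']
    congr 1
    field_simp
    ring
  unfold A
  rw [hsplit]
  field_simp
  ring

lemma summable_A' (x : ℝ) (hx : 0 < x) : Summable (A x) := by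
  set C : ℝ := 4 + 2*(x-1)^2 with hC
  have hC0 : (0:ℝ) ≤ C := by positivity
  set n₀ : ℕ := 2 + Nat.ceil (2*|x-1|) with hn₀
  have hbound : ∀ n : ℕ, n₀ ≤ n → |A x n| ≤ C/((n:ℝ)+1)^2 := by
    intro n hn
    have hn2 : 2 ≤ n := le_trans (by omega) hn
    have hm2 : (2:ℝ) ≤ (n:ℝ)+1 := by
      have : (2:ℝ) ≤ (n:ℝ) := by exact_mod_cast hn2
      linarith
    have hmpos : (0:ℝ) < (n:ℝ)+1 := by positivity
    have hmx : 2*|x-1| ≤ (n:ℝ)+1 := by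
      have h2 : Nat.ceil (2*|x-1|) ≤ n := by omega
      have h1 : (Nat.ceil (2*|x-1|) : ℝ) ≤ (n:ℝ) := by exact_mod_cast h2
      calc 2*|x-1| ≤ (Nat.ceil (2*|x-1|) : ℝ) := Nat.le_ceil _
        _ ≤ (n:ℝ) := h1
        _ ≤ (n:ℝ)+1 := by linarith
    have ht : |(x-1)/((n:ℝ)+1)| ≤ 1/2 := by
      rw [abs_div, abs_of_pos hmpos, div_le_div_iff₀ hmpos (by norm_num)]
      linarith
    have hcrux := crux (n+1) (by omega)
    have hc : ((n+1:ℕ):ℝ) = (n:ℝ)+1 := by push_cast; ring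
    rw [hc] at hcrux
    have hlq := Stmt16Aux.log_quad ht
    rw [A_decomp' x hx n]
    calc |(harm (n+1) - Real.log ((n:ℝ)+1) - γ - 1/(2*((n:ℝ)+1)))
          - (Real.log (1 + (x-1)/((n:ℝ)+1)) - (x-1)/((n:ℝ)+1))|
        ≤ |harm (n+1) - Real.log ((n:ℝ)+1) - γ - 1/(2*((n:ℝ)+1))|
          + |Real.log (1 + (x-1)/((n:ℝ)+1)) - (x-1)/((n:ℝ)+1)| := abs_sub _ _
      _ ≤ 4/((n:ℝ)+1)^2 + 2*((x-1)/((n:ℝ)+1))^2 := add_le_add hcrux hlq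
      _ = C/((n:ℝ)+1)^2 := by
          rw [hC, div_pow]
          field_simp
  have hg : Summable (fun n : ℕ => C/((n:ℝ)+1)^2) := by
    have h0 : Summable (fun n : ℕ => 1/((n:ℝ))^2) :=
      Real.summable_one_div_nat_pow.mpr one_lt_two
    have h1 := (summable_nat_add_iff 1).2 h0
    apply (h1.mul_left C).congr
    intro n
    push_cast
    ring
  rw [← summable_nat_add_iff n₀]
  apply Summable.of_abs
  apply Summable.of_nonneg_of_le (fun n => abs_nonneg _) (fun n => ?_) hg
  calc |A x (n+n₀)| ≤ C/(((n+n₀:ℕ):ℝ)+1)^2 := hbound _ (by omega)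
    _ ≤ C/((n:ℝ)+1)^2 := by
        have h1 : ((n:ℝ)+1) ≤ ((n+n₀:ℕ):ℝ)+1 := by
          push_cast
          have : (0:ℝ) ≤ (n₀:ℝ) := by positivity
          linarith
        gcongr
end Stmt16Aux
theorem stmt16 (x : ℝ) (hx : 0 < x) :
    HasSum (fun n : ℕ =>
        harm (n + 1) - Real.log (((n : ℝ) + 1) + x - 1) - Real.eulerMascheroniConstant
          + x / ((n : ℝ) + 1) - 3 / (2 * ((n : ℝ) + 1)))
      (Real.eulerMascheroniConstant * x + Real.log (Real.Gamma x)
        + (1 - Real.eulerMascheroniConstant - Real.log (2 * Real.pi)) / 2) := by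
  have hs := Stmt16Aux.summable_A' x hx
  have h1 := hs.hasSum.tendsto_sum_nat
  have h2 := Stmt16Aux.tendsto_sum_A x hx
  have heq := tendsto_nhds_unique h1 h2
  have h3 := hs.hasSum
  rw [heq] at h3
  exact h3
end

section
/- The series ∑_{n=1}^∞ (H_n − log(n) − γ − 1/(2n)) converges and equals (γ + 1 − log(2π))/2. -/
open Real Filter

lemma log_quad_lb {x : ℝ} (hx : 0 ≤ x) : x - x^2/2 ≤ Real.log (1+x) := by
  have key : MonotoneOn (fun x : ℝ => Real.log (1+x) - (x - x^2/2)) (Set.Ici 0) := by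
    apply monotoneOn_of_deriv_nonneg (convex_Ici 0)
    · apply ContinuousOn.sub
      · exact ContinuousOn.log (by fun_prop) (fun x hx =>
          ne_of_gt (by have := Set.mem_Ici.mp hx; linarith))
      · fun_prop
    · intro x hx
      rw [interior_Ici] at hx
      have h1 : (1:ℝ) + x ≠ 0 := by have : (0:ℝ) < x := hx; positivity
      exact ((((hasDerivAt_id' (x := x)).const_add 1).log h1).sub
        ((hasDerivAt_id' (x := x)).sub ((hasDerivAt_pow 2 x).div_const 2))).differentiableAt.differentiableWithinAt
    · intro x hx
      rw [interior_Ici] at hx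
      have hx' : (0:ℝ) < x := hx
      have h1 : (1:ℝ) + x ≠ 0 := by positivity
      have hd := ((((hasDerivAt_id' (x := x)).const_add 1).log h1).sub
        ((hasDerivAt_id' (x := x)).sub ((hasDerivAt_pow 2 x).div_const 2)))
      rw [show deriv (fun x => Real.log (1 + x) - (x - x ^ 2 / 2)) x = _ from hd.deriv]
      have : 1 / (1+x) - (1 - (2:ℕ) * x ^ (2-1) / 2) = x^2/(1+x) := by
        field_simp; ring
      rw [this]; positivity
  have h0 := key Set.self_mem_Ici (Set.mem_Ici.mpr hx) hx
  simp at h0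
  linarith

lemma log_quad_ub {x : ℝ} (hx : 0 ≤ x) : Real.log (1+x) ≤ x - x^2/(2*(1+x)) := by
  have key : MonotoneOn (fun x : ℝ => (x - x^2/(2*(1+x))) - Real.log (1+x)) (Set.Ici 0) := by
    apply monotoneOn_of_deriv_nonneg (convex_Ici 0)
    · apply ContinuousOn.sub
      · apply ContinuousOn.sub continuousOn_id
        apply ContinuousOn.div (by fun_prop) (by fun_prop)
        intro x hx
        exact ne_of_gt (by have := Set.mem_Ici.mp hx; nlinarith)
      · exact ContinuousOn.log (by fun_prop) (fun x hx =>
          ne_of_gt (by have := Set.mem_Ici.mp hx; linarith))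
    · intro x hx
      rw [interior_Ici] at hx
      have hx' : (0:ℝ) < x := hx
      have h1 : (1:ℝ) + x ≠ 0 := by positivity
      have h2 : (2:ℝ)*(1+x) ≠ 0 := by positivity
      exact (((hasDerivAt_id' (x := x)).sub ((hasDerivAt_pow 2 x).div
        (((hasDerivAt_id' (x := x)).const_add 1).const_mul 2) h2)).sub
        (((hasDerivAt_id' (x := x)).const_add 1).log h1)).differentiableAt.differentiableWithinAt
    · intro x hx
      rw [interior_Ici] at hx
      have hx' : (0:ℝ) < x := hx
      have h1 : (1:ℝ) + x ≠ 0 := by positivity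
      have h2 : (2:ℝ)*(1+x) ≠ 0 := by positivity
      have hd := (((hasDerivAt_id' (x := x)).sub ((hasDerivAt_pow 2 x).div
        (((hasDerivAt_id' (x := x)).const_add 1).const_mul 2) h2)).sub
        (((hasDerivAt_id' (x := x)).const_add 1).log h1))
      rw [show deriv (fun x => x - x ^ 2 / (2 * (1 + x)) - Real.log (1 + x)) x = _ from hd.deriv]
      have : 1 - ((2:ℕ) * x ^ (2-1) * (2*(1+x)) - x^2 * (2 * 1)) / (2*(1+x))^2
          - 1 / (1+x) = x^2/(2*(1+x)^2) := by
        field_simp; ring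
      rw [this]; positivity
  have h0 := key Set.self_mem_Ici (Set.mem_Ici.mpr hx) hx
  simp at h0
  linarith


lemma harm_eq (n : ℕ) : harm n = (harmonic n : ℝ) := by
  unfold harm harmonic
  push_cast
  simp [one_div]

lemma harm_succ (n : ℕ) : harm (n+1) = harm n + 1/((n:ℝ)+1) := by
  unfold harm; rw [Finset.sum_range_succ]

noncomputable def auxP (n : ℕ) : ℝ := harm n - Real.log ((n:ℝ)+1)

noncomputable def auxF (m : ℕ) : ℝ := 1/((m:ℝ)+1) - Real.log (1 + 1/((m:ℝ)+1))

lemma tendsto_auxP : Filter.Tendsto auxP Filter.atTop (nhds Real.eulerMascheroniConstant) := by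
  apply Real.tendsto_harmonic_sub_log_add_one.congr
  intro n
  rw [auxP, harm_eq]

lemma auxP_succ_sub (m : ℕ) : auxP (m+1) - auxP m = auxF m := by
  have h1 : ((m:ℝ)+1) > 0 := by positivity
  have h2 : ((m:ℝ)+2) > 0 := by positivity
  have : Real.log (1 + 1/((m:ℝ)+1)) = Real.log ((m:ℝ)+2) - Real.log ((m:ℝ)+1) := by
    rw [← Real.log_div h2.ne' h1.ne']
    field_simp
    ring
  unfold auxP auxF
  rw [harm_succ, this]
  push_cast
  ring

lemma auxF_lb (m : ℕ) : 1/(2*((m:ℝ)+1)*((m:ℝ)+2)) ≤ auxF m := by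
  have hx : (0:ℝ) ≤ 1/((m:ℝ)+1) := by positivity
  have := log_quad_ub hx
  have he : (1/((m:ℝ)+1))^2/(2*(1+1/((m:ℝ)+1))) = 1/(2*((m:ℝ)+1)*((m:ℝ)+2)) := by
    have h1 : ((m:ℝ)+1) ≠ 0 := by positivity
    have h2 : ((m:ℝ)+2) ≠ 0 := by positivity
    field_simp
    ring
  unfold auxF
  linarith [he ▸ this]

lemma auxF_ub (m : ℕ) : auxF m ≤ 1/(2*((m:ℝ)+1)^2) := by
  have hx : (0:ℝ) ≤ 1/((m:ℝ)+1) := by positivity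
  have := log_quad_lb hx
  have he : (1/((m:ℝ)+1))^2/2 = 1/(2*((m:ℝ)+1)^2) := by
    have h1 : ((m:ℝ)+1) ≠ 0 := by positivity
    field_simp
  unfold auxF
  linarith [he ▸ this]

lemma auxF_nonneg (m : ℕ) : 0 ≤ auxF m := by
  have := auxF_lb m
  have : (0:ℝ) < 1/(2*((m:ℝ)+1)*((m:ℝ)+2)) := by positivity
  linarith [auxF_lb m]


lemma auxP_add_sub (n M : ℕ) : auxP (n+M) - auxP n = ∑ i ∈ Finset.range M, auxF (n+i) := by
  induction M with
  | zero => simp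
  | succ M ih =>
    rw [Finset.sum_range_succ, ← ih, ← auxP_succ_sub (n+M), ← Nat.add_assoc]
    ring

lemma tendsto_auxP_shift (n : ℕ) :
    Tendsto (fun M => auxP (n+M) - auxP n) atTop (nhds (Real.eulerMascheroniConstant - auxP n)) := by
  apply Filter.Tendsto.sub_const
  apply (tendsto_auxP.comp (tendsto_add_atTop_nat n)).congr
  intro M
  simp [Nat.add_comm]

lemma inv_shift_tendsto (c : ℝ) :
    Tendsto (fun M : ℕ => 1/(2*((M:ℝ)+c))) atTop (nhds 0) := by
  have h0 : Tendsto (fun M:ℕ => (M:ℝ) + c) atTop atTop :=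
    tendsto_atTop_add_const_right atTop c tendsto_natCast_atTop_atTop
  have h1 : Tendsto (fun M:ℕ => 2*((M:ℝ)+c)) atTop atTop :=
    h0.const_mul_atTop two_pos
  exact (tendsto_inv_atTop_zero.comp h1).congr (fun M => by simp [Function.comp, one_div])

lemma telescope1 (n M : ℕ) : ∑ i ∈ Finset.range M, (1/(2*((n:ℝ)+i)) - 1/(2*((n:ℝ)+i+1)))
    = 1/(2*((n:ℝ)+(0:ℕ))) - 1/(2*((n:ℝ)+M)) := by
  rw [← Finset.sum_range_sub' (fun i : ℕ => 1/(2*((n:ℝ)+i))) M]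
  apply Finset.sum_congr rfl
  intro i _
  push_cast
  ring

lemma telescope2 (n M : ℕ) : ∑ i ∈ Finset.range M, (1/(2*((n:ℝ)+i+1)) - 1/(2*((n:ℝ)+i+1+1)))
    = 1/(2*((n:ℝ)+(0:ℕ)+1)) - 1/(2*((n:ℝ)+M+1)) := by
  rw [← Finset.sum_range_sub' (fun i : ℕ => 1/(2*((n:ℝ)+i+1))) M]
  apply Finset.sum_congr rfl
  intro i _
  push_cast
  ring

lemma T_ub {n : ℕ} (hn : 1 ≤ n) : Real.eulerMascheroniConstant - auxP n ≤ 1/(2*(n:ℝ)) := by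
  have hn' : (1:ℝ) ≤ (n:ℝ) := by exact_mod_cast hn
  refine le_of_tendsto (tendsto_auxP_shift n) (Filter.Eventually.of_forall fun M => ?_)
  rw [auxP_add_sub]
  have h1 : ∑ i ∈ Finset.range M, auxF (n+i)
      ≤ ∑ i ∈ Finset.range M, (1/(2*((n:ℝ)+i)) - 1/(2*((n:ℝ)+i+1))) := by
    apply Finset.sum_le_sum
    intro i _
    refine (auxF_ub (n+i)).trans ?_
    have hni : (1:ℝ) ≤ (n:ℝ)+i := by
      have : (0:ℝ) ≤ i := Nat.cast_nonneg i; linarith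
    have e : 1/(2*((n:ℝ)+i)) - 1/(2*((n:ℝ)+i+1)) = 1/(2*((n:ℝ)+i)*((n:ℝ)+i+1)) := by
      field_simp; ring
    rw [e]
    push_cast
    apply one_div_le_one_div_of_le (by nlinarith)
    nlinarith
  have h2 := telescope1 n M
  simp only [Nat.cast_zero, add_zero] at h2
  have h3 : (0:ℝ) ≤ 1/(2*((n:ℝ)+M)) := by positivity
  rw [h2] at h1
  linarith

lemma T_lb (n : ℕ) : 1/(2*((n:ℝ)+1)) ≤ Real.eulerMascheroniConstant - auxP n := by
  have key : ∀ M : ℕ, 1/(2*((n:ℝ)+1)) - 1/(2*((n:ℝ)+M+1)) ≤ auxP (n+M) - auxP n := by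
    intro M
    rw [auxP_add_sub]
    have h1 : ∑ i ∈ Finset.range M, (1/(2*((n:ℝ)+i+1)) - 1/(2*((n:ℝ)+i+1+1)))
        ≤ ∑ i ∈ Finset.range M, auxF (n+i) := by
      apply Finset.sum_le_sum
      intro i _
      refine le_trans ?_ (auxF_lb (n+i))
      have e : 1/(2*((n:ℝ)+i+1)) - 1/(2*((n:ℝ)+i+1+1)) = 1/(2*((n:ℝ)+i+1)*((n:ℝ)+i+2)) := by
        field_simp; ring
      rw [e]
      push_cast
      ring_nf
      exact le_refl _
    have h2 := telescope2 n M
    simp only [Nat.cast_zero, add_zero] at h2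
    rw [h2] at h1
    linarith
  have hL : Tendsto (fun M : ℕ => 1/(2*((n:ℝ)+1)) - 1/(2*((n:ℝ)+M+1))) atTop
      (nhds (1/(2*((n:ℝ)+1)))) := by
    have h := (inv_shift_tendsto ((n:ℝ)+1)).const_sub (1/(2*((n:ℝ)+1)))
    have h2 := h.congr (fun M : ℕ => by
      show 1/(2*((n:ℝ)+1)) - 1/(2*((M:ℝ)+((n:ℝ)+1))) = 1/(2*((n:ℝ)+1)) - 1/(2*((n:ℝ)+M+1))
      ring_nf)
    simpa using h2
  exact le_of_tendsto_of_tendsto' hL (tendsto_auxP_shift n) key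


lemma lemA : Tendsto (fun n : ℕ => ((n:ℝ)+1/2) * (harm n - Real.log n - Real.eulerMascheroniConstant))
    atTop (nhds (1/2)) := by
  set γ := Real.eulerMascheroniConstant
  have l1 : Tendsto (fun n : ℕ => (n:ℝ) * Real.log (1 + 1/(n:ℝ))) atTop (nhds 1) := by
    have := (Real.tendsto_mul_log_one_add_div_atTop 1).comp (tendsto_natCast_atTop_atTop (R := ℝ))
    exact this.congr (fun n => by simp [Function.comp])
  have l2 : Tendsto (fun n : ℕ => Real.log (1 + 1/(n:ℝ))) atTop (nhds 0) := by
    have := (tendsto_one_div_atTop_nhds_zero_nat.const_add 1).log (by norm_num)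
    simpa using this
  have l3 : Tendsto (fun n : ℕ => ((n:ℝ)+1/2) * (γ - auxP n)) atTop (nhds (1/2)) := by
    have hg : Tendsto (fun n : ℕ => 1/2 - (1/2) * (1/(2*((n:ℝ)+1)))) atTop (nhds (1/2)) := by
      have := ((inv_shift_tendsto 1).const_mul (1/2)).const_sub (1/2)
      simpa using this
    have hh : Tendsto (fun n : ℕ => 1/2 + (1/2) * (1/(2*((n:ℝ)+0)))) atTop (nhds (1/2)) := by
      have := ((inv_shift_tendsto 0).const_mul (1/2)).const_add (1/2)
      simpa using this
    apply tendsto_of_tendsto_of_tendsto_of_le_of_le' hg hh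
    · filter_upwards with n
      have h1 := T_lb n
      have h2 : (0:ℝ) ≤ (n:ℝ)+1/2 := by positivity
      have h3 := mul_le_mul_of_nonneg_left h1 h2
      have e : ((n:ℝ)+1/2) * (1/(2*((n:ℝ)+1))) = 1/2 - (1/2)*(1/(2*((n:ℝ)+1))) := by
        have : ((n:ℝ)+1) ≠ 0 := by positivity
        field_simp
        ring
      linarith [e ▸ h3]
    · filter_upwards [eventually_ge_atTop 1] with n hn
      have hn' : (1:ℝ) ≤ (n:ℝ) := by exact_mod_cast hn
      have h1 := T_ub hn
      have h2 : (0:ℝ) ≤ (n:ℝ)+1/2 := by positivity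
      have h3 := mul_le_mul_of_nonneg_left h1 h2
      have e : ((n:ℝ)+1/2) * (1/(2*(n:ℝ))) = 1/2 + (1/2)*(1/(2*((n:ℝ)+0))) := by
        have : (n:ℝ) ≠ 0 := by positivity
        field_simp
        ring
      linarith [e ▸ h3]
  have main := (l1.add (l2.const_mul (1/2))).sub l3
  norm_num at main
  apply main.congr'
  filter_upwards [eventually_ge_atTop 1] with n hn
  have hn' : (1:ℝ) ≤ (n:ℝ) := by exact_mod_cast hn
  have hlog : Real.log (1 + 1/(n:ℝ)) = Real.log ((n:ℝ)+1) - Real.log (n:ℝ) := by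
    rw [← Real.log_div (by positivity) (by positivity)]
    congr 1
    field_simp
  unfold auxP
  simp only [← one_div]
  rw [hlog]
  ring

lemma lemB : Tendsto (fun n : ℕ => ((n:ℝ)+1/2) * Real.log (n:ℝ) - (n:ℝ) - Real.log (n.factorial : ℝ))
    atTop (nhds (-(Real.log (2*Real.pi))/2)) := by
  have hsp : Real.sqrt Real.pi ≠ 0 := by positivity
  have h1 : Tendsto (fun n : ℕ => -Real.log (Stirling.stirlingSeq n) - (1/2)*Real.log 2) atTop
      (nhds (-(Real.log (2*Real.pi))/2)) := by
    have := ((Stirling.tendsto_stirlingSeq_sqrt_pi.log hsp).neg).sub_const ((1/2)*Real.log 2)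
    have e : -Real.log (Real.sqrt Real.pi) - (1/2)*Real.log 2 = -(Real.log (2*Real.pi))/2 := by
      rw [Real.log_sqrt Real.pi_pos.le, Real.log_mul (by norm_num) (by positivity)]
      ring
    rwa [e] at this
  apply h1.congr'
  filter_upwards [eventually_ge_atTop 1] with n hn
  have hn' : (1:ℝ) ≤ (n:ℝ) := by exact_mod_cast hn
  have hn0 : (n:ℝ) ≠ 0 := by positivity
  rw [Stirling.log_stirlingSeq_formula, Real.log_mul (by norm_num) hn0,
    Real.log_div hn0 (Real.exp_ne_zero 1), Real.log_exp]
  ring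


theorem stmt17 :
    HasSum (fun n : ℕ =>
        harm (n + 1) - Real.log ((n : ℝ) + 1) - Real.eulerMascheroniConstant
          - 1 / (2 * ((n : ℝ) + 1)))
      ((Real.eulerMascheroniConstant + 1 - Real.log (2 * Real.pi)) / 2) := by
  set γ := Real.eulerMascheroniConstant with hγ
  set a : ℕ → ℝ := fun n =>
    harm (n + 1) - Real.log ((n : ℝ) + 1) - γ - 1 / (2 * ((n : ℝ) + 1)) with ha
  -- partial sums formula
  have hS : ∀ N : ℕ, ∑ n ∈ Finset.range N, a n
      = ((N:ℝ)+1/2) * harm N - (N:ℝ) - Real.log (N.factorial : ℝ) - (N:ℝ)*γ := by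
    intro N
    induction N with
    | zero => simp [harm]
    | succ N ih =>
      rw [Finset.sum_range_succ, ih]
      have h1 : ((N:ℝ)+1) ≠ 0 := by positivity
      have hfac : Real.log ((N+1).factorial : ℝ)
          = Real.log ((N:ℝ)+1) + Real.log (N.factorial : ℝ) := by
        rw [Nat.factorial_succ]
        push_cast
        rw [Real.log_mul h1 (by exact_mod_cast Nat.cast_ne_zero.mpr N.factorial_ne_zero)]
      rw [ha]
      simp only []
      rw [harm_succ, hfac]
      push_cast
      field_simp
      ring
  -- limit of partial sums
  have hlim : Tendsto (fun N => ∑ n ∈ Finset.range N, a n) atTop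
      (nhds ((γ + 1 - Real.log (2*Real.pi))/2)) := by
    have hcomb := (lemA.add ((tendsto_const_nhds (x := γ/2)).add lemB))
    have : (1:ℝ)/2 + (γ/2 + -(Real.log (2*Real.pi))/2) = (γ + 1 - Real.log (2*Real.pi))/2 := by ring
    rw [this] at hcomb
    apply hcomb.congr
    intro N
    rw [hS N]
    ring
  -- summability
  have hbase : Summable (fun n : ℕ => 1/((n:ℝ)+1)^2) := by
    have h0 : Summable (fun n : ℕ => 1/(n:ℝ)^2) := summable_one_div_nat_pow.mpr one_lt_two
    have := (summable_nat_add_iff 1).mpr h0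
    apply this.congr
    intro n
    push_cast
    ring
  have hbound : ∀ n : ℕ, |a n| ≤ 1/((n:ℝ)+1)^2 := by
    intro n
    have h1 : ((n:ℝ)+1) > 0 := by positivity
    have h2 : ((n:ℝ)+2) > 0 := by positivity
    have hlog : Real.log (1 + 1/((n:ℝ)+1)) = Real.log ((n:ℝ)+2) - Real.log ((n:ℝ)+1) := by
      rw [← Real.log_div h2.ne' h1.ne']
      congr 1
      field_simp
      ring
    have e : a n = (Real.log (1 + 1/((n:ℝ)+1)) - (γ - auxP (n+1))) - 1/(2*((n:ℝ)+1)) := by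
      rw [ha]
      simp only [auxP]
      rw [hlog]
      push_cast
      ring
    set x : ℝ := 1/((n:ℝ)+1) with hx
    have hx0 : 0 ≤ x := by positivity
    have hub : Real.log (1+x) ≤ x := by
      have := Real.log_le_sub_one_of_pos (x := 1+x) (by linarith)
      linarith
    have hlb := log_quad_lb hx0
    have hT1 := T_lb (n+1)
    have hT2 := T_ub (n := n+1) (Nat.le_add_left 1 n)
    push_cast at hT1 hT2
    rw [← hγ] at hT1 hT2
    have hxx : x^2 = 1/((n:ℝ)+1)^2 := by rw [hx]; field_simp
    have hsum2 : 1/(2*((n:ℝ)+1)) + 1/(2*((n:ℝ)+1)) = x := by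
      rw [hx]; field_simp
      norm_num
    have hx2 : 0 ≤ x^2 := sq_nonneg x
    rw [abs_le, e]
    constructor
    · nlinarith
    · have he4 : 1/(2*((n:ℝ)+1)) - 1/(2*((n:ℝ)+1+1)) = 1/(2*((n:ℝ)+1)*((n:ℝ)+1+1)) := by
        field_simp; ring
      have he5 : 1/(2*((n:ℝ)+1)*((n:ℝ)+1+1)) ≤ 1/((n:ℝ)+1)^2 := by
        apply one_div_le_one_div_of_le (by positivity)
        nlinarith
      linarith
  have hsum : Summable a :=
    Summable.of_abs (Summable.of_nonneg_of_le (fun n => abs_nonneg _) hbound hbase)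
  have h1 := hsum.hasSum.tendsto_sum_nat
  have : ∑' n, a n = (γ + 1 - Real.log (2*Real.pi))/2 := tendsto_nhds_unique h1 hlim
  exact this ▸ hsum.hasSum
end
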